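/- arXiv:2208.14545 — 6 statements merged into one kernel-verified Lean document; each statement's English description precedes it below -/
import Mathlib

section
/- Let G be a connected, locally finite, vertex-transitive, infinite simple graph whose simple random walk is transient, i.e. ∑_{n=0}^∞ p_n(o,o) < ∞ for a fixed vertex o. Then the volume growth is superquadratic: |B(o,n)|/n² tends to infinity as n → ∞; equivalently, for every A > 0 there exists N such that |B(o,n)| ≥ A·n² for all n ≥ N. -/
namespace Stmt1

variable {V : Type*}

/-- The number of walks of length `n` from `x` to `y` in the graph `G`. -/
noncomputable def numWalks (G : SimpleGraph V) (n : ℕ) (x y : V) : ℕ :=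
  Nat.card {w : G.Walk x y // w.length = n}

/-- The `n`-step transition probability `p_n(x,y) = N_n(x,y)/d^n` of the simple random walk
on the `d`-regular graph `G`. -/
noncomputable def transProb (G : SimpleGraph V) (d : ℕ) (n : ℕ) (x y : V) : ℝ :=
  (numWalks G n x y : ℝ) / (d : ℝ) ^ n

/-- The ball of radius `n` around `o` in the graph metric of `G`. -/
def ball (G : SimpleGraph V) (o : V) (n : ℕ) : Set V :=
  {v : V | G.dist o v ≤ n}

/-- The Green function of the walk started at `o`. -/
noncomputable def green (G : SimpleGraph V) (d : ℕ) (o x : V) : ℝ :=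
  ∑' n : ℕ, transProb G d n o x

section Aux

open Finset

variable [DecidableEq V] (G : SimpleGraph V) [G.LocallyFinite]

variable (d : ℕ) (o : V)

lemma numWalks_eq (n : ℕ) (x y : V) :
    numWalks G n x y = (G.finsetWalkLength n x y).card := by
  rw [numWalks, Nat.card_eq_fintype_card, ← SimpleGraph.card_set_walk_length_eq]
  rfl

lemma numWalks_symm (n : ℕ) (x y : V) : numWalks G n x y = numWalks G n y x := by
  apply Nat.card_congr
  exact ⟨fun w => ⟨w.1.reverse, by simp [w.2]⟩, fun w => ⟨w.1.reverse, by simp [w.2]⟩,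
    fun w => by simp, fun w => by simp⟩

lemma numWalks_zero (x y : V) : numWalks G 0 x y = if x = y then 1 else 0 := by
  split_ifs with h
  · subst h
    rw [numWalks]
    rw [Nat.card_eq_one_iff_unique]
    constructor
    · constructor
      rintro ⟨p, hp⟩ ⟨q, hq⟩
      simp only [Subtype.mk.injEq]
      cases p with
      | nil => cases q with
        | nil => rfl
        | cons h q => simp at hq
      | cons h p => simp at hp
    · exact ⟨⟨.nil, rfl⟩⟩
  · rw [numWalks, Nat.card_eq_zero]
    left
    constructor
    rintro ⟨p, hp⟩
    exact h (SimpleGraph.Walk.eq_of_length_eq_zero hp) |>.elim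

lemma numWalks_succ (n : ℕ) (x y : V) :
    numWalks G (n+1) x y = ∑ w ∈ G.neighborFinset x, numWalks G n w y := by
  rw [numWalks_eq]
  rw [show G.finsetWalkLength (n+1) x y = Finset.univ.biUnion
      (fun (w : G.neighborSet x) => (G.finsetWalkLength n w y).map
        ⟨fun p => SimpleGraph.Walk.cons w.property p, fun _ _ => by intro h; cases h; rfl⟩) from rfl]
  rw [Finset.card_biUnion]
  · rw [SimpleGraph.neighborFinset_def, ← Finset.sum_set_coe (s := G.neighborSet x)]
    congr 1
    ext w
    rw [Finset.card_map, numWalks_eq]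
  · rintro ⟨a, ha⟩ - ⟨b, hb⟩ - hab
    rw [Function.onFun, Finset.disjoint_left]
    rintro p hp hq
    simp only [Finset.mem_map, Function.Embedding.coeFn_mk] at hp hq
    obtain ⟨p1, -, rfl⟩ := hp
    obtain ⟨q1, -, hq1⟩ := hq
    injection hq1 with h1 h2 h3 h4
    exact hab (Subtype.ext h2.symm)

lemma numWalks_eq_zero {n : ℕ} {x y : V} (h : n < G.dist x y) :
    numWalks G n x y = 0 := by
  rw [numWalks, Nat.card_eq_zero]
  left
  constructor
  rintro ⟨p, hp⟩
  exact absurd (hp ▸ SimpleGraph.dist_le p) (not_le.mpr h)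

lemma walk_append_inj {b c : V} : ∀ {a : V} (p q : G.Walk a b) (r : G.Walk b c),
    p.length = q.length → p.append r = q.append r → p = q := by
  intro a p
  induction p with
  | nil =>
    intro q r hl _
    cases q with
    | nil => rfl
    | cons h q => simp at hl
  | cons h p ih =>
    intro q r hl happ
    cases q with
    | nil => simp at hl
    | cons h' q =>
      simp only [SimpleGraph.Walk.cons_append] at happ
      injection happ with h1 h2 h3 h4
      subst h2
      rw [ih q r (by simpa using hl) (eq_of_heq h4)]

lemma numWalks_le_append (n : ℕ) (x y z : V) (w0 : G.Walk y z) :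
    numWalks G n x y ≤ numWalks G (n + w0.length) x z := by
  apply Nat.card_le_card_of_injective
    (fun w : {w : G.Walk x y // w.length = n} =>
      (⟨w.1.append w0, by simp [w.2]⟩ : {w : G.Walk x z // w.length = n + w0.length}))
  rintro ⟨w1, hw1⟩ ⟨w2, hw2⟩ h12
  simp only [Subtype.mk.injEq] at h12
  exact Subtype.ext (walk_append_inj G w1 w2 w0 (hw1.trans hw2.symm) h12)

lemma card_neighborFinset (hlf : ∀ v : V, (G.neighborSet v).Finite)
    (hreg : ∀ v : V, (G.neighborSet v).ncard = d) (x : V) :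
    (G.neighborFinset x).card = d := by
  rw [SimpleGraph.neighborFinset_def, ← Set.ncard_eq_toFinset_card', hreg]

lemma transProb_nonneg (n : ℕ) (x y : V) : 0 ≤ transProb G d n x y := by
  apply div_nonneg (by positivity) (by positivity)

lemma transProb_zero (x y : V) : transProb G d 0 x y = if x = y then 1 else 0 := by
  rw [transProb, numWalks_zero, pow_zero, div_one]
  split_ifs <;> simp

lemma sum_nbr_transProb (hd : 1 ≤ d) (hlf : ∀ v : V, (G.neighborSet v).Finite)
    (hreg : ∀ v : V, (G.neighborSet v).ncard = d) (n : ℕ) (x : V) :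
    ∑ y ∈ G.neighborFinset x, transProb G d n o y = d * transProb G d (n+1) o x := by
  have hd0 : (d : ℝ) ≠ 0 := by positivity
  simp only [transProb, ← Finset.sum_div]
  rw [← Nat.cast_sum]
  have : ∑ y ∈ G.neighborFinset x, numWalks G n o y = numWalks G (n+1) o x := by
    rw [numWalks_symm G (n+1), numWalks_succ]
    exact Finset.sum_congr rfl fun y _ => numWalks_symm G n o y
  rw [this]
  field_simp
  ring

lemma transProb_le_shift (hd : 1 ≤ d) (n : ℕ) (x : V) (w0 : G.Walk x o) :
    transProb G d n o x ≤ (d : ℝ) ^ w0.length * transProb G d (n + w0.length) o o := by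
  have hd0 : (0:ℝ) < (d : ℝ) := by positivity
  rw [transProb, transProb, div_le_iff₀ (by positivity)]
  have h1 : (numWalks G n o x : ℝ) ≤ (numWalks G (n + w0.length) o o : ℝ) := by
    exact_mod_cast numWalks_le_append G n o x o w0
  have heq : (d:ℝ) ^ w0.length * ((numWalks G (n + w0.length) o o : ℝ) / (d:ℝ)^(n + w0.length)) * (d:ℝ)^n
      = (numWalks G (n + w0.length) o o : ℝ) := by
    rw [pow_add]
    field_simp
  rw [heq]
  exact h1

lemma summable_transProb (hd : 1 ≤ d) (hconn : G.Connected)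
    (htransient : Summable (fun n : ℕ => transProb G d n o o)) (x : V) :
    Summable (fun n : ℕ => transProb G d n o x) := by
  obtain ⟨w0⟩ : Nonempty (G.Walk x o) := hconn.preconnected x o
  apply Summable.of_nonneg_of_le (fun n => transProb_nonneg G d n o x)
    (fun n => transProb_le_shift G d o hd n x w0)
  exact (((summable_nat_add_iff w0.length).mpr htransient)).mul_left _

lemma green_nonneg (x : V) : 0 ≤ green G d o x :=
  tsum_nonneg (fun n => transProb_nonneg G d n o x)

lemma partial_le_green (hd : 1 ≤ d) (hconn : G.Connected)
    (htransient : Summable (fun n : ℕ => transProb G d n o o)) (x : V) (N : ℕ) :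
    ∑ n ∈ Finset.range N, transProb G d n o x ≤ green G d o x :=
  Summable.sum_le_tsum _ (fun n _ => transProb_nonneg G d n o x)
    (summable_transProb G d o hd hconn htransient x)

lemma tendsto_partial_green (hd : 1 ≤ d) (hconn : G.Connected)
    (htransient : Summable (fun n : ℕ => transProb G d n o o)) (x : V) :
    Filter.Tendsto (fun N => ∑ n ∈ Finset.range N, transProb G d n o x)
      Filter.atTop (nhds (green G d o x)) :=
  (summable_transProb G d o hd hconn htransient x).hasSum.tendsto_sum_nat

lemma partial_eq_zero {x : V} {N : ℕ} (h : N < G.dist o x) :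
    ∑ n ∈ Finset.range (N+1), transProb G d n o x = 0 := by
  apply Finset.sum_eq_zero
  intro n hn
  rw [Finset.mem_range] at hn
  rw [transProb, numWalks_eq_zero G (lt_of_le_of_lt (by omega) h)]
  simp

lemma partial_harmonic (hd : 1 ≤ d) (hlf : ∀ v : V, (G.neighborSet v).Finite)
    (hreg : ∀ v : V, (G.neighborSet v).ncard = d) (M : ℕ) (x : V) :
    ∑ y ∈ G.neighborFinset x, ∑ n ∈ Finset.range M, transProb G d n o y
      = d * ((∑ n ∈ Finset.range M, transProb G d n o x)
          + transProb G d M o x - transProb G d 0 o x) := by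
  rw [Finset.sum_comm]
  have h1 : ∀ n, ∑ y ∈ G.neighborFinset x, transProb G d n o y
      = d * transProb G d (n+1) o x := fun n => sum_nbr_transProb G d o hd hlf hreg n x
  calc ∑ n ∈ Finset.range M, ∑ y ∈ G.neighborFinset x, transProb G d n o y
      = ∑ n ∈ Finset.range M, d * transProb G d (n+1) o x := by
        exact Finset.sum_congr rfl fun n _ => h1 n
    _ = d * ∑ n ∈ Finset.range M, transProb G d (n+1) o x := by rw [Finset.mul_sum]
    _ = d * ((∑ n ∈ Finset.range (M+1), transProb G d n o x) - transProb G d 0 o x) := by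
        rw [Finset.sum_range_succ']
        ring
    _ = _ := by rw [Finset.sum_range_succ]

lemma green_harmonic (hd : 1 ≤ d) (hconn : G.Connected)
    (hlf : ∀ v : V, (G.neighborSet v).Finite)
    (hreg : ∀ v : V, (G.neighborSet v).ncard = d)
    (htransient : Summable (fun n : ℕ => transProb G d n o o)) (x : V) :
    ∑ y ∈ G.neighborFinset x, green G d o y
      = d * (green G d o x - if x = o then 1 else 0) := by
  have hsum : ∀ y, Summable (fun n : ℕ => transProb G d n o y) :=
    summable_transProb G d o hd hconn htransient
  have h1 : ∑ y ∈ G.neighborFinset x, green G d o y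
      = ∑' n : ℕ, ∑ y ∈ G.neighborFinset x, transProb G d n o y :=
    (Summable.tsum_finsetSum (fun y _ => hsum y)).symm
  rw [h1]
  have h2 : ∀ n : ℕ, ∑ y ∈ G.neighborFinset x, transProb G d n o y
      = d * transProb G d (n+1) o x := fun n => sum_nbr_transProb G d o hd hlf hreg n x
  rw [tsum_congr h2, tsum_mul_left]
  have h3 : green G d o x = transProb G d 0 o x + ∑' n : ℕ, transProb G d (n+1) o x :=
    Summable.tsum_eq_zero_add (hsum x)
  rw [show (∑' n : ℕ, transProb G d (n+1) o x) = green G d o x - transProb G d 0 o x by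
    rw [h3]; ring]
  rw [transProb_zero]
  congr 2
  simp [eq_comm]

lemma ball_finite (hconn : G.Connected) (hlf : ∀ v : V, (G.neighborSet v).Finite)
    (n : ℕ) : (ball G o n).Finite := by
  induction n with
  | zero =>
    apply Set.Finite.subset (Set.finite_singleton o)
    intro v hv
    simp only [ball, Set.mem_setOf_eq, Nat.le_zero] at hv
    simp [(hconn.dist_eq_zero_iff).mp hv |>.symm]
  | succ n ih =>
    apply Set.Finite.subset (ih.union (ih.biUnion (fun y _ => hlf y)))
    intro v hv
    simp only [ball, Set.mem_setOf_eq] at hv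
    by_cases h : G.dist o v ≤ n
    · exact Or.inl h
    · have hdist : G.dist o v = n + 1 := by omega
      obtain ⟨p, hp⟩ := hconn.exists_walk_length_eq_dist o v
      right
      cases hq : p.reverse with
      | nil =>
        have := congrArg SimpleGraph.Walk.length hq
        simp [hp, hdist] at this
        simp at hdist
      | @cons _ y _ h' q =>
        have hlen : q.length = n := by
          have := congrArg SimpleGraph.Walk.length hq
          simp [hp, hdist] at this
          omega
        have hy : y ∈ ball G o n := by
          show G.dist o y ≤ n
          have := SimpleGraph.dist_le q.reverse
          simpa [hlen] using this
        exact Set.mem_biUnion hy h'.symm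
lemma swap_sum (F : Finset V) (f : V → V → ℝ) :
    ∑ x ∈ F, ∑ y ∈ G.neighborFinset x, (if y ∈ F then f x y else 0)
      = ∑ x ∈ F, ∑ y ∈ G.neighborFinset x, (if y ∈ F then f y x else 0) := by
  classical
  have key : ∀ g : V → V → ℝ,
      ∑ x ∈ F, ∑ y ∈ G.neighborFinset x, (if y ∈ F then g x y else 0)
        = ∑ x ∈ F, ∑ y ∈ F, (if G.Adj x y then g x y else 0) := by
    intro g
    refine Finset.sum_congr rfl fun x _ => ?_
    rw [← Finset.sum_filter, ← Finset.sum_filter]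
    apply Finset.sum_congr ?_ (fun _ _ => rfl)
    ext y
    simp only [Finset.mem_filter, SimpleGraph.mem_neighborFinset]
    tauto
  rw [key, key, Finset.sum_comm]
  refine Finset.sum_congr rfl fun x _ => Finset.sum_congr rfl fun y _ => ?_
  exact if_congr (G.adj_comm y x) rfl rfl

lemma antisym_sum_zero (F : Finset V) (g : V → ℝ) :
    ∑ x ∈ F, ∑ y ∈ G.neighborFinset x, (if y ∈ F then g x - g y else 0) = 0 := by
  have h := swap_sum G F (fun x y => g x - g y)
  have h2 : ∑ x ∈ F, ∑ y ∈ G.neighborFinset x, (if y ∈ F then g y - g x else 0)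
      = - ∑ x ∈ F, ∑ y ∈ G.neighborFinset x, (if y ∈ F then g x - g y else 0) := by
    rw [← Finset.sum_neg_distrib]
    refine Finset.sum_congr rfl fun x _ => ?_
    rw [← Finset.sum_neg_distrib]
    refine Finset.sum_congr rfl fun y _ => ?_
    split_ifs <;> ring
  rw [h2] at h
  linarith

lemma cut_identity (hd : 1 ≤ d) (hconn : G.Connected)
    (hlf : ∀ v : V, (G.neighborSet v).Finite)
    (hreg : ∀ v : V, (G.neighborSet v).ncard = d)
    (htransient : Summable (fun n : ℕ => transProb G d n o o))
    (B : ℕ → Finset V) (hB : ∀ j v, v ∈ B j ↔ G.dist o v ≤ j) (j : ℕ) :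
    (d:ℝ) = ∑ x ∈ B j, ∑ y ∈ G.neighborFinset x,
      (if G.dist o x = j ∧ G.dist o y = j + 1
        then green G d o x - green G d o y else 0) := by
  have ho : o ∈ B j := (hB j o).mpr (by simp [SimpleGraph.dist_self])
  have h1 : ∑ x ∈ B j, ((d:ℝ) * green G d o x - ∑ y ∈ G.neighborFinset x, green G d o y)
      = (d:ℝ) := by
    have : ∀ x ∈ B j, (d:ℝ) * green G d o x - ∑ y ∈ G.neighborFinset x, green G d o y
        = if x = o then (d:ℝ) else 0 := by
      intro x _
      rw [green_harmonic G d o hd hconn hlf hreg htransient x]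
      split_ifs <;> ring
    rw [Finset.sum_congr rfl this, Finset.sum_ite_eq' (B j) o (fun _ => (d:ℝ)), if_pos ho]
  have h3 : (d:ℝ) = ∑ x ∈ B j, ∑ y ∈ G.neighborFinset x,
      (green G d o x - green G d o y) := by
    rw [← h1]
    refine (Finset.sum_congr rfl fun x _ => ?_).symm
    rw [Finset.sum_sub_distrib, Finset.sum_const, card_neighborFinset G d hlf hreg,
      nsmul_eq_mul]
  have h4 : ∀ x ∈ B j, ∀ y ∈ G.neighborFinset x,
      green G d o x - green G d o y
        = (if y ∈ B j then green G d o x - green G d o y else 0)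
          + (if G.dist o x = j ∧ G.dist o y = j + 1
              then green G d o x - green G d o y else 0) := by
    intro x hx y hy
    rw [SimpleGraph.mem_neighborFinset] at hy
    rw [hB] at hx
    by_cases hyB : y ∈ B j
    · have hle := (hB j y).mp hyB
      have : ¬ (G.dist o x = j ∧ G.dist o y = j + 1) := by omega
      rw [if_pos hyB, if_neg this]
      ring
    · have hgt : j < G.dist o y := by
        by_contra hc
        exact hyB ((hB j y).mpr (by omega))
      have htri : G.dist o y ≤ G.dist o x + 1 := by
        have := hconn.dist_triangle (u := o) (v := x) (w := y)
        rwa [(SimpleGraph.dist_eq_one_iff_adj).mpr hy] at this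
      have hcond : G.dist o x = j ∧ G.dist o y = j + 1 := by omega
      rw [if_neg hyB, if_pos hcond]
      ring
  calc (d:ℝ) = ∑ x ∈ B j, ∑ y ∈ G.neighborFinset x,
      (green G d o x - green G d o y) := h3
    _ = ∑ x ∈ B j, ∑ y ∈ G.neighborFinset x,
        ((if y ∈ B j then green G d o x - green G d o y else 0)
          + (if G.dist o x = j ∧ G.dist o y = j + 1
              then green G d o x - green G d o y else 0)) := by
        refine Finset.sum_congr rfl fun x hx => Finset.sum_congr rfl fun y hy => ?_
        exact h4 x hx y hy
    _ = _ := by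
        rw [Finset.sum_congr rfl (fun x (_ : x ∈ B j) => Finset.sum_add_distrib),
          Finset.sum_add_distrib, antisym_sum_zero G (B j) (green G d o), zero_add]
lemma energy_partial_bound (hd : 1 ≤ d) (hconn : G.Connected)
    (hlf : ∀ v : V, (G.neighborSet v).Finite)
    (hreg : ∀ v : V, (G.neighborSet v).ncard = d)
    (htransient : Summable (fun n : ℕ => transProb G d n o o))
    (B : ℕ → Finset V) (hB : ∀ j v, v ∈ B j ↔ G.dist o v ≤ j)
    (K N : ℕ) (hKN : K ≤ N + 1) :
    ∑ j ∈ Finset.range K, ∑ x ∈ B (N+1), ∑ y ∈ G.neighborFinset x,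
      (if G.dist o x = j ∧ G.dist o y = j + 1
        then ((∑ n ∈ Finset.range (N+1), transProb G d n o x)
            - ∑ n ∈ Finset.range (N+1), transProb G d n o y)^2 else 0)
      ≤ 2 * d * green G d o o := by
  classical
  set u : V → ℝ := fun x => ∑ n ∈ Finset.range (N+1), transProb G d n o x with hu
  set F := B (N+1) with hF
  have hu0 : ∀ x : V, N + 1 ≤ G.dist o x → u x = 0 := by
    intro x hx
    exact partial_eq_zero G d o (by omega)
  have hunn : ∀ x, 0 ≤ u x := by
    intro x
    exact Finset.sum_nonneg fun n _ => transProb_nonneg G d n o x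
  have hadj_dist : ∀ x y : V, G.Adj x y → G.dist o y ≤ G.dist o x + 1 := by
    intro x y hxy
    have := hconn.dist_triangle (u := o) (v := x) (w := y)
    rwa [(SimpleGraph.dist_eq_one_iff_adj).mpr hxy] at this
  -- Step 1 : reorder sums
  rw [Finset.sum_comm]
  have step1 : ∀ x ∈ F, ∑ j ∈ Finset.range K, ∑ y ∈ G.neighborFinset x,
      (if G.dist o x = j ∧ G.dist o y = j + 1 then (u x - u y)^2 else 0)
      = ∑ y ∈ G.neighborFinset x, ∑ j ∈ Finset.range K,
        (if G.dist o x = j ∧ G.dist o y = j + 1 then (u x - u y)^2 else 0) :=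
    fun x _ => Finset.sum_comm
  rw [Finset.sum_congr rfl step1]
  -- Step 2 : bound the inner j-sum
  have step2 : ∀ x ∈ F, ∀ y ∈ G.neighborFinset x,
      ∑ j ∈ Finset.range K,
        (if G.dist o x = j ∧ G.dist o y = j + 1 then (u x - u y)^2 else 0)
      ≤ (if y ∈ F then (u x - u y)^2 else 0) := by
    intro x hx y hy
    have hone : ∀ j ∈ Finset.range K,
        (if G.dist o x = j ∧ G.dist o y = j + 1 then (u x - u y)^2 else 0)
        = (if j = G.dist o x then
            (if G.dist o x = j ∧ G.dist o y = j + 1 then (u x - u y)^2 else 0) else 0) := by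
      intro j _
      by_cases hc : G.dist o x = j ∧ G.dist o y = j + 1
      · rw [if_pos hc, if_pos hc.1.symm]
      · rw [if_neg hc]
        split_ifs <;> simp [hc]
    rw [Finset.sum_congr rfl hone, Finset.sum_ite_eq' (Finset.range K) (G.dist o x)]
    by_cases h1 : G.dist o x ∈ Finset.range K
    · rw [if_pos h1]
      by_cases h2 : G.dist o x = G.dist o x ∧ G.dist o y = G.dist o x + 1
      · rw [if_pos h2]
        have hyF : y ∈ F := by
          rw [hF, hB]
          rw [Finset.mem_range] at h1
          omega
        rw [if_pos hyF]
      · rw [if_neg h2]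
        split_ifs with h
        · exact sq_nonneg _
        · exact le_refl 0
    · rw [if_neg h1]
      split_ifs with h
      · exact sq_nonneg _
      · exact le_refl 0
  have step3 : ∑ x ∈ F, ∑ y ∈ G.neighborFinset x, ∑ j ∈ Finset.range K,
      (if G.dist o x = j ∧ G.dist o y = j + 1 then (u x - u y)^2 else 0)
      ≤ ∑ x ∈ F, ∑ y ∈ G.neighborFinset x, (if y ∈ F then (u x - u y)^2 else 0) :=
    Finset.sum_le_sum fun x hx => Finset.sum_le_sum fun y hy => step2 x hx y hy
  refine le_trans step3 ?_
  have hsq : ∀ x y : V, (u x - u y)^2 = u x * (u x - u y) + u y * (u y - u x) := by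
    intro x y; ring
  have hswap := swap_sum G F (fun x y => u x * (u x - u y))
  have hQ2 : ∑ x ∈ F, ∑ y ∈ G.neighborFinset x, (if y ∈ F then (u x - u y)^2 else 0)
      = 2 * ∑ x ∈ F, ∑ y ∈ G.neighborFinset x, (if y ∈ F then u x * (u x - u y) else 0) := by
    have hQsplit : ∑ x ∈ F, ∑ y ∈ G.neighborFinset x, (if y ∈ F then (u x - u y)^2 else 0)
        = (∑ x ∈ F, ∑ y ∈ G.neighborFinset x, (if y ∈ F then u x * (u x - u y) else 0))
          + (∑ x ∈ F, ∑ y ∈ G.neighborFinset x, (if y ∈ F then u y * (u y - u x) else 0)) := by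
      rw [← Finset.sum_add_distrib]
      refine Finset.sum_congr rfl fun x _ => ?_
      rw [← Finset.sum_add_distrib]
      refine Finset.sum_congr rfl fun y _ => ?_
      split_ifs with h
      · exact hsq x y
      · ring
    rw [hQsplit, ← hswap]
    ring
  rw [hQ2]
  have hdrop : ∑ x ∈ F, ∑ y ∈ G.neighborFinset x, (if y ∈ F then u x * (u x - u y) else 0)
      = ∑ x ∈ F, ∑ y ∈ G.neighborFinset x, u x * (u x - u y) := by
    refine Finset.sum_congr rfl fun x hx => Finset.sum_congr rfl fun y hy => ?_
    by_cases hyF : y ∈ F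
    · rw [if_pos hyF]
    · rw [if_neg hyF]
      have hdy : ¬ G.dist o y ≤ N + 1 := fun hc => hyF ((hB (N+1) y).mpr hc)
      rw [SimpleGraph.mem_neighborFinset] at hy
      have := hadj_dist x y hy
      rw [hu0 x (by omega)]
      ring
  rw [hdrop]
  have hAx : ∀ x ∈ F, ∑ y ∈ G.neighborFinset x, u x * (u x - u y)
      = (if o = x then (d:ℝ) * u x else 0)
        - (d:ℝ) * (u x * transProb G d (N+1) o x) := by
    intro x _
    have hs : ∀ (s : Finset V) (c : ℝ) (f : V → ℝ), ∑ y ∈ s, c * (c - f y)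
        = (s.card : ℝ) * (c * c) - c * ∑ y ∈ s, f y := by
      intro s c f
      have h' : ∀ y ∈ s, c * (c - f y) = c * c - c * f y := fun y _ => by ring
      rw [Finset.sum_congr rfl h', Finset.sum_sub_distrib, Finset.sum_const,
        nsmul_eq_mul, Finset.mul_sum]
    rw [hs (G.neighborFinset x) (u x) u, card_neighborFinset G d hlf hreg,
      partial_harmonic G d o hd hlf hreg (N+1) x, transProb_zero]
    split_ifs with h <;> ring
  rw [Finset.sum_congr rfl hAx, Finset.sum_sub_distrib,
    Finset.sum_ite_eq F o (fun x => (d:ℝ) * u x)]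
  have hoF : o ∈ F := (hB (N+1) o).mpr (by simp [SimpleGraph.dist_self])
  rw [if_pos hoF]
  have h1 : u o ≤ green G d o o := partial_le_green G d o hd hconn htransient o (N+1)
  have h2 : 0 ≤ ∑ x ∈ F, (d:ℝ) * (u x * transProb G d (N+1) o x) :=
    Finset.sum_nonneg fun x _ => mul_nonneg (by positivity)
      (mul_nonneg (hunn x) (transProb_nonneg G d (N+1) o x))
  have h3 : (d:ℝ) * u o ≤ (d:ℝ) * green G d o o :=
    mul_le_mul_of_nonneg_left h1 (by positivity)
  linarith

lemma sum_energy_le (hd : 1 ≤ d) (hconn : G.Connected)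
    (hlf : ∀ v : V, (G.neighborSet v).Finite)
    (hreg : ∀ v : V, (G.neighborSet v).ncard = d)
    (htransient : Summable (fun n : ℕ => transProb G d n o o))
    (B : ℕ → Finset V) (hB : ∀ j v, v ∈ B j ↔ G.dist o v ≤ j) (K : ℕ) :
    ∑ j ∈ Finset.range K, ∑ x ∈ B j, ∑ y ∈ G.neighborFinset x,
      (if G.dist o x = j ∧ G.dist o y = j + 1
        then (green G d o x - green G d o y)^2 else 0)
      ≤ 2 * d * green G d o o := by
  classical
  set uu : ℕ → V → ℝ := fun N x => ∑ n ∈ Finset.range (N+1), transProb G d n o x with huu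
  have hNbound : ∀ N : ℕ, K ≤ N + 1 →
      ∑ j ∈ Finset.range K, ∑ x ∈ B j, ∑ y ∈ G.neighborFinset x,
        (if G.dist o x = j ∧ G.dist o y = j + 1
          then (uu N x - uu N y)^2 else 0) ≤ 2 * d * green G d o o := by
    intro N hKN
    refine le_trans ?_ (energy_partial_bound G d o hd hconn hlf hreg htransient B hB K N hKN)
    refine Finset.sum_le_sum fun j hj => ?_
    refine Finset.sum_le_sum_of_subset_of_nonneg ?_ ?_
    · intro v hv
      rw [hB] at hv ⊢
      rw [Finset.mem_range] at hj
      omega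
    · intro x _ _
      refine Finset.sum_nonneg fun y _ => ?_
      split_ifs
      · exact sq_nonneg _
      · exact le_refl 0
  have htends : ∀ z : V, Filter.Tendsto (fun N => uu N z) Filter.atTop
      (nhds (green G d o z)) := by
    intro z
    exact (tendsto_partial_green G d o hd hconn htransient z).comp
      (Filter.tendsto_add_atTop_nat 1)
  have hlim : Filter.Tendsto (fun N => ∑ j ∈ Finset.range K, ∑ x ∈ B j,
      ∑ y ∈ G.neighborFinset x,
      (if G.dist o x = j ∧ G.dist o y = j + 1 then (uu N x - uu N y)^2 else 0))
      Filter.atTop (nhds (∑ j ∈ Finset.range K, ∑ x ∈ B j, ∑ y ∈ G.neighborFinset x,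
      (if G.dist o x = j ∧ G.dist o y = j + 1
        then (green G d o x - green G d o y)^2 else 0))) := by
    refine tendsto_finset_sum _ fun j _ => tendsto_finset_sum _ fun x _ =>
      tendsto_finset_sum _ fun y _ => ?_
    by_cases hc : G.dist o x = j ∧ G.dist o y = j + 1
    · simp only [if_pos hc]
      exact ((htends x).sub (htends y)).pow 2
    · simp only [if_neg hc]
      exact tendsto_const_nhds
  refine le_of_tendsto hlim ?_
  filter_upwards [Filter.eventually_ge_atTop K] with N hN
  exact hNbound N (by omega)

lemma cs_bound (hd : 1 ≤ d) (hconn : G.Connected)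
    (hlf : ∀ v : V, (G.neighborSet v).Finite)
    (hreg : ∀ v : V, (G.neighborSet v).ncard = d)
    (htransient : Summable (fun n : ℕ => transProb G d n o o))
    (B : ℕ → Finset V) (hB : ∀ j v, v ∈ B j ↔ G.dist o v ≤ j) (j : ℕ) :
    ((d:ℝ))^2 ≤ (∑ x ∈ B j, ∑ y ∈ G.neighborFinset x,
        (if G.dist o x = j ∧ G.dist o y = j + 1 then (1:ℝ) else 0))
      * (∑ x ∈ B j, ∑ y ∈ G.neighborFinset x,
        (if G.dist o x = j ∧ G.dist o y = j + 1
          then (green G d o x - green G d o y)^2 else 0)) := by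
  classical
  have hci := cut_identity G d o hd hconn hlf hreg htransient B hB j
  rw [Finset.sum_sigma' (B j) (fun x => G.neighborFinset x)] at hci
  rw [Finset.sum_sigma' (B j) (fun x => G.neighborFinset x),
    Finset.sum_sigma' (B j) (fun x => G.neighborFinset x)]
  set s := (B j).sigma (fun x => G.neighborFinset x)
  set f : (_ : V) × V → ℝ := fun p =>
    if G.dist o p.1 = j ∧ G.dist o p.2 = j + 1 then (1:ℝ) else 0 with hf
  set g : (_ : V) × V → ℝ := fun p =>
    if G.dist o p.1 = j ∧ G.dist o p.2 = j + 1
      then green G d o p.1 - green G d o p.2 else 0 with hg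
  have h1 : ∀ p : (_ : V) × V,
      (if G.dist o p.1 = j ∧ G.dist o p.2 = j + 1
        then green G d o p.1 - green G d o p.2 else 0) = f p * g p := by
    intro p
    rw [hf, hg]
    by_cases hc : G.dist o p.1 = j ∧ G.dist o p.2 = j + 1 <;> simp [hc]
  have h2 : ((d:ℝ))^2 = (∑ p ∈ s, f p * g p)^2 := by
    rw [← Finset.sum_congr rfl (fun p _ => h1 p), ← hci]
  rw [h2]
  refine le_trans (Finset.sum_mul_sq_le_sq_mul_sq s f g) ?_
  apply le_of_eq
  congr 1
  · refine Finset.sum_congr rfl fun p _ => ?_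
    rw [hf]
    by_cases hc : G.dist o p.1 = j ∧ G.dist o p.2 = j + 1 <;> simp [hc]
  · refine Finset.sum_congr rfl fun p _ => ?_
    rw [hg]
    by_cases hc : G.dist o p.1 = j ∧ G.dist o p.2 = j + 1 <;> simp [hc]

lemma cut_card_bound (hlf : ∀ v : V, (G.neighborSet v).Finite)
    (hreg : ∀ v : V, (G.neighborSet v).ncard = d)
    (B : ℕ → Finset V) (j : ℕ) :
    (∑ x ∈ B j, ∑ y ∈ G.neighborFinset x,
        (if G.dist o x = j ∧ G.dist o y = j + 1 then (1:ℝ) else 0))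
      ≤ (d:ℝ) * (((B j).filter (fun v => G.dist o v = j)).card : ℝ) := by
  classical
  have hinner : ∀ x ∈ B j, ∑ y ∈ G.neighborFinset x,
      (if G.dist o x = j ∧ G.dist o y = j + 1 then (1:ℝ) else 0)
      ≤ (if G.dist o x = j then (d:ℝ) else 0) := by
    intro x _
    by_cases hx : G.dist o x = j
    · rw [if_pos hx]
      calc ∑ y ∈ G.neighborFinset x,
          (if G.dist o x = j ∧ G.dist o y = j + 1 then (1:ℝ) else 0)
          ≤ ∑ _y ∈ G.neighborFinset x, (1:ℝ) := by
            refine Finset.sum_le_sum fun y _ => ?_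
            split_ifs
            · exact le_refl 1
            · exact zero_le_one
        _ = (d:ℝ) := by
            rw [Finset.sum_const, nsmul_eq_mul, mul_one, card_neighborFinset G d hlf hreg]
    · rw [if_neg hx]
      apply le_of_eq
      refine Finset.sum_eq_zero fun y _ => ?_
      rw [if_neg (by tauto)]
  refine le_trans (Finset.sum_le_sum hinner) ?_
  rw [← Finset.sum_filter, Finset.sum_const, nsmul_eq_mul, mul_comm]

lemma sphere_sum_le (B : ℕ → Finset V) (hB : ∀ j v, v ∈ B j ↔ G.dist o v ≤ j)
    (m n : ℕ) :
    ∑ j ∈ Finset.Ico m n, ((((B j).filter (fun v => G.dist o v = j)).card : ℕ) : ℝ)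
      ≤ ((B n).card : ℝ) := by
  classical
  have key : ∑ j ∈ Finset.Ico m n, ((B j).filter (fun v => G.dist o v = j)).card
      ≤ (B n).card := by
    have heq : ∀ j ∈ Finset.Ico m n, ((B j).filter (fun v => G.dist o v = j)).card
        = ((B n).filter (fun v => G.dist o v = j)).card := by
      intro j hj
      rw [Finset.mem_Ico] at hj
      congr 1
      ext v
      simp only [Finset.mem_filter, hB]
      omega
    rw [Finset.sum_congr rfl heq]
    rw [← Finset.card_biUnion]
    · apply Finset.card_le_card
      intro v hv
      rw [Finset.mem_biUnion] at hv
      obtain ⟨j, _, hv⟩ := hv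
      exact (Finset.mem_filter.mp hv).1
    · intro a _ b _ hab
      rw [Function.onFun, Finset.disjoint_left]
      intro v hv hv2
      rw [Finset.mem_filter] at hv hv2
      omega
  calc ∑ j ∈ Finset.Ico m n, ((((B j).filter (fun v => G.dist o v = j)).card : ℕ) : ℝ)
      = ((∑ j ∈ Finset.Ico m n, ((B j).filter (fun v => G.dist o v = j)).card : ℕ) : ℝ) := by
        rw [Nat.cast_sum]
    _ ≤ _ := by exact_mod_cast key


end Aux

/-- A transient transitive graph has superquadratic volume growth. -/
theorem transient_superquadratic_growth
    (G : SimpleGraph V) (d : ℕ) (hd : 1 ≤ d)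
    (hinf : Infinite V)
    (hconn : G.Connected)
    (hlf : ∀ v : V, (G.neighborSet v).Finite)
    (hreg : ∀ v : V, (G.neighborSet v).ncard = d)
    (htrans : ∀ u v : V, ∃ φ : G ≃g G, φ u = v)
    (o : V)
    (htransient : Summable (fun n : ℕ => transProb G d n o o)) :
    ∀ A : ℝ, 0 < A → ∃ N : ℕ, ∀ n : ℕ, N ≤ n →
      A * (n : ℝ) ^ 2 ≤ ((ball G o n).ncard : ℝ) := by
  classical
  haveI : G.LocallyFinite := fun v => (hlf v).fintype
  intro A hA
  have hd0 : (0:ℝ) < (d:ℝ) := by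
    have : (1:ℝ) ≤ (d:ℝ) := by exact_mod_cast hd
    linarith
  have hfin : ∀ n : ℕ, (ball G o n).Finite := fun n => ball_finite G o hconn hlf n
  set B : ℕ → Finset V := fun n => (hfin n).toFinset with hBdef
  have hB : ∀ j v, v ∈ B j ↔ G.dist o v ≤ j := by
    intro j v
    rw [hBdef, Set.Finite.mem_toFinset]
    rfl
  have hcard : ∀ n : ℕ, ((ball G o n).ncard : ℝ) = ((B n).card : ℝ) := by
    intro n
    rw [hBdef, Set.ncard_eq_toFinset_card _ (hfin n)]
  set g : V → ℝ := green G d o with hgdef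
  set e : ℕ → ℝ := fun j => ∑ x ∈ B j, ∑ y ∈ G.neighborFinset x,
    (if G.dist o x = j ∧ G.dist o y = j + 1 then (g x - g y)^2 else 0) with hedef
  have he_nonneg : ∀ j, 0 ≤ e j := by
    intro j
    refine Finset.sum_nonneg fun x _ => Finset.sum_nonneg fun y _ => ?_
    split_ifs
    · exact sq_nonneg _
    · exact le_refl 0
  have hesum : ∀ K, ∑ j ∈ Finset.range K, e j ≤ 2 * d * g o :=
    fun K => sum_energy_le G d o hd hconn hlf hreg htransient B hB K
  have hsummable : Summable e :=
    summable_of_sum_range_le he_nonneg hesum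
  set sph : ℕ → ℕ := fun j => ((B j).filter (fun v => G.dist o v = j)).card with hsph
  have hkey : ∀ j, (d:ℝ) ≤ (sph j : ℝ) * e j := by
    intro j
    have h1 := cs_bound G d o hd hconn hlf hreg htransient B hB j
    have h2 := cut_card_bound G d o hlf hreg B j
    have h3 : ((d:ℝ))^2 ≤ ((d:ℝ) * (sph j : ℝ)) * e j :=
      le_trans h1 (mul_le_mul_of_nonneg_right h2 (he_nonneg j))
    nlinarith [h3, hd0]
  have he_pos : ∀ j, 0 < e j := by
    intro j
    rcases (he_nonneg j).lt_or_eq with h | h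
    · exact h
    · exfalso
      have := hkey j
      rw [← h] at this
      nlinarith [this, hd0]
  set ε := (d:ℝ) / (4*A) with hε
  have hε0 : 0 < ε := div_pos hd0 (by linarith)
  obtain ⟨m, hm⟩ : ∃ m, (∑' j, e j) - ε < ∑ j ∈ Finset.range m, e j := by
    have htd := hsummable.hasSum.tendsto_sum_nat
    have := htd.eventually (eventually_gt_nhds (show (∑' j, e j) - ε < ∑' j, e j by linarith))
    exact this.exists
  have htail : ∀ n, ∑ j ∈ Finset.Ico m n, e j ≤ ε := by
    intro n
    by_cases hmn : m ≤ n
    · rw [Finset.sum_Ico_eq_sub _ hmn]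
      have h1 : ∑ j ∈ Finset.range n, e j ≤ ∑' j, e j :=
        Summable.sum_le_tsum _ (fun i _ => he_nonneg i) hsummable
      linarith
    · rw [Finset.Ico_eq_empty (by omega), Finset.sum_empty]
      linarith
  refine ⟨2*m, ?_⟩
  intro n hn
  have hmn : m ≤ n := by omega
  have hCS := Finset.sum_mul_sq_le_sq_mul_sq (Finset.Ico m n)
    (fun j => Real.sqrt (e j)) (fun j => 1 / Real.sqrt (e j))
  have hfg : ∀ j ∈ Finset.Ico m n, Real.sqrt (e j) * (1 / Real.sqrt (e j)) = 1 := by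
    intro j _
    rw [mul_one_div, div_self (Real.sqrt_ne_zero'.mpr (he_pos j))]
  have hcardIco : ∑ j ∈ Finset.Ico m n, Real.sqrt (e j) * (1 / Real.sqrt (e j))
      = ((n - m : ℕ) : ℝ) := by
    rw [Finset.sum_congr rfl hfg, Finset.sum_const, nsmul_eq_mul, mul_one, Nat.card_Ico]
  have hf2 : ∑ j ∈ Finset.Ico m n, (Real.sqrt (e j))^2 = ∑ j ∈ Finset.Ico m n, e j :=
    Finset.sum_congr rfl fun j _ => Real.sq_sqrt (he_nonneg j)
  have hg2 : ∑ j ∈ Finset.Ico m n, (1 / Real.sqrt (e j))^2 ≤ ((B n).card : ℝ) / d := by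
    have hterm : ∀ j ∈ Finset.Ico m n, (1 / Real.sqrt (e j))^2 ≤ (sph j : ℝ) / d := by
      intro j _
      rw [div_pow, one_pow, Real.sq_sqrt (he_nonneg j), div_le_div_iff₀ (he_pos j) hd0]
      have := hkey j
      linarith
    refine le_trans (Finset.sum_le_sum hterm) ?_
    rw [← Finset.sum_div]
    exact (div_le_div_iff_of_pos_right hd0).mpr (sphere_sum_le G o B hB m n)
  have hsq_nonneg : 0 ≤ ∑ j ∈ Finset.Ico m n, (Real.sqrt (e j))^2 :=
    Finset.sum_nonneg fun j _ => sq_nonneg _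
  have h1 : ((n - m : ℕ):ℝ)^2 ≤ ε * (((B n).card : ℝ)/d) := by
    rw [← hcardIco]
    refine le_trans hCS ?_
    refine mul_le_mul ?_ hg2 ?_ hε0.le
    · rw [hf2]; exact htail n
    · exact Finset.sum_nonneg fun j _ => sq_nonneg _
  have hconv : ε * (((B n).card:ℝ)/d) = ((B n).card:ℝ)/(4*A) := by
    rw [hε]
    field_simp
  have hBn : 4*A*(((n-m:ℕ)):ℝ)^2 ≤ ((B n).card : ℝ) := by
    rw [hconv] at h1
    rw [le_div_iff₀ (by linarith)] at h1
    linarith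
  have hnm2 : (n:ℝ) ≤ 2*((n-m:ℕ):ℝ) := by
    have hcast : ((n-m:ℕ):ℝ) = (n:ℝ) - (m:ℝ) := by
      rw [Nat.cast_sub hmn]
    rw [hcast]
    have h2m : (2*m : ℕ) ≤ n := hn
    have : 2*(m:ℝ) ≤ (n:ℝ) := by exact_mod_cast h2m
    linarith
  rw [hcard n]
  have hn0 : (0:ℝ) ≤ (n:ℝ) := Nat.cast_nonneg n
  have hq : (n:ℝ)^2 ≤ 4*((n-m:ℕ):ℝ)^2 := by nlinarith [hnm2, hn0]
  have hq2 : A * (n:ℝ)^2 ≤ A * (4*((n-m:ℕ):ℝ)^2) :=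
    mul_le_mul_of_nonneg_left hq hA.le
  linarith

end Stmt1
end

section
/- Let G be a connected, locally finite, vertex-transitive simple graph with at least cubic volume growth: there exists c > 0 such that |B(o,n)| ≥ c·n³ for all integers n ≥ 1 (for a fixed vertex o). Then G satisfies the 3-dimensional isoperimetric inequality: there exists a constant c' > 0 such that for every finite nonempty set of vertices K, |∂K| ≥ c' · |K|^{2/3}. -/
namespace Stmt4

variable {V : Type*}

/-- The ball of radius `n` around `o` in the graph metric of `G`. -/
def ball (G : SimpleGraph V) (o : V) (n : ℕ) : Set V :=
  {v : V | G.dist o v ≤ n}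

/-- The inner vertex boundary of `K`: vertices of `K` with a neighbour outside `K`. -/
def innerBoundary (G : SimpleGraph V) (K : Set V) : Set V :=
  {v : V | v ∈ K ∧ ∃ w : V, G.Adj v w ∧ w ∉ K}

set_option linter.unusedSectionVars false

section AuxBasic

variable {G : SimpleGraph V}

/-- distance is preserved by automorphisms -/
lemma iso_dist (hconn : G.Connected) (φ : G ≃g G) (x y : V) :
    G.dist (φ x) (φ y) = G.dist x y := by
  have key : ∀ (ψ : G ≃g G) (a b : V), G.dist (ψ a) (ψ b) ≤ G.dist a b := by
    intro ψ a b
    obtain ⟨p, hp⟩ := hconn.exists_walk_length_eq_dist a b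
    calc G.dist (ψ a) (ψ b) ≤ (p.map ψ.toHom).length := SimpleGraph.dist_le _
      _ = p.length := by simp
      _ = G.dist a b := hp
  refine le_antisymm (key φ x y) ?_
  have h2 := key φ.symm (φ x) (φ y)
  simpa using h2

lemma mem_ball_iff {o : V} {n : ℕ} {v : V} : v ∈ ball G o n ↔ G.dist o v ≤ n := Iff.rfl

lemma dist_getVert_le (hconn : G.Connected) {x v : V} (p : G.Walk x v) (j : ℕ) :
    G.dist x (p.getVert j) ≤ j := by
  induction p generalizing j with
  | nil =>
    simp [SimpleGraph.Walk.getVert, SimpleGraph.dist_self]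
  | @cons a b c h q ih =>
    cases j with
    | zero => simp [SimpleGraph.Walk.getVert]
    | succ j =>
      have h1 : G.dist a ((SimpleGraph.Walk.cons h q).getVert (j+1)) ≤
          G.dist a b + G.dist b (q.getVert j) := by
        rw [SimpleGraph.Walk.getVert_cons_succ]
        exact hconn.dist_triangle
      have h2 : G.dist a b ≤ 1 := by
        rw [SimpleGraph.dist_eq_one_iff_adj.mpr h]
      have := ih j
      omega

lemma exists_adj_of_dist_succ (hconn : G.Connected) {o v : V} {n : ℕ}
    (h : G.dist o v = n + 1) : ∃ u : V, G.Adj u v ∧ G.dist o u ≤ n := by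
  obtain ⟨p, hp⟩ := hconn.exists_walk_length_eq_dist o v
  refine ⟨p.getVert n, ?_, dist_getVert_le hconn p n⟩
  have := p.adj_getVert_succ (i := n) (by omega)
  have hv : p.getVert (n+1) = v := by
    have hl : p.length = n + 1 := by rw [hp, h]
    rw [← hl]
    exact p.getVert_length
  rwa [hv] at this

lemma ball_finite (hconn : G.Connected) (hlf : ∀ v : V, (G.neighborSet v).Finite)
    (o : V) (n : ℕ) : (ball G o n).Finite := by
  induction n with
  | zero =>
    have : ball G o 0 ⊆ {o} := by
      intro v hv
      have : G.dist o v = 0 := Nat.le_zero.mp hv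
      have := (hconn.dist_eq_zero_iff).mp this
      simp [this.symm]
    exact Set.Finite.subset (Set.finite_singleton o) this
  | succ n ih =>
    have hsub : ball G o (n+1) ⊆ ball G o n ∪ ⋃ u ∈ ball G o n, G.neighborSet u := by
      intro v hv
      rcases Nat.lt_or_ge (G.dist o v) (n+1) with h | h
      · exact Or.inl (Nat.lt_succ_iff.mp h)
      · have heq : G.dist o v = n + 1 := le_antisymm hv h
        obtain ⟨u, hadj, hu⟩ := exists_adj_of_dist_succ hconn heq
        right
        exact Set.mem_biUnion hu (by simpa using hadj)
    exact Set.Finite.subset (ih.union (Set.Finite.biUnion ih (fun u _ => hlf u))) hsub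

/-- image of a ball under an automorphism -/
lemma iso_image_ball (hconn : G.Connected) (φ : G ≃g G) (x : V) (n : ℕ) :
    φ '' ball G x n = ball G (φ x) n := by
  ext w
  constructor
  · rintro ⟨v, hv, rfl⟩
    simpa [mem_ball_iff, iso_dist hconn φ] using hv
  · intro hw
    refine ⟨φ.symm w, ?_, by simp⟩
    have : G.dist (φ x) (φ (φ.symm w)) ≤ n := by simpa [mem_ball_iff] using hw
    rwa [iso_dist hconn φ] at this

lemma ball_ncard_eq (hconn : G.Connected) (htrans : ∀ u v : V, ∃ φ : G ≃g G, φ u = v)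
    (x y : V) (n : ℕ) : (ball G x n).ncard = (ball G y n).ncard := by
  obtain ⟨φ, hφ⟩ := htrans x y
  rw [← hφ, ← iso_image_ball hconn φ x n]
  exact (Set.ncard_image_of_injective _ φ.injective).symm


/-- Orbit of `u` under the stabilizer of `o` in the automorphism group. -/
def Orb (G : SimpleGraph V) (o u : V) : Set V :=
  {w | ∃ φ : G ≃g G, φ o = o ∧ φ u = w}

lemma mem_Orb_self (o u : V) : u ∈ Orb G o u := ⟨SimpleGraph.Iso.refl, rfl, rfl⟩

lemma Orb_dist (hconn : G.Connected) {o u w : V} (hw : w ∈ Orb G o u) :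
    G.dist o w = G.dist o u := by
  obtain ⟨φ, hφo, hφu⟩ := hw
  calc G.dist o w = G.dist (φ o) (φ u) := by rw [hφo, hφu]
    _ = G.dist o u := iso_dist hconn φ o u

lemma Orb_finite (hconn : G.Connected) (hlf : ∀ v : V, (G.neighborSet v).Finite)
    (o u : V) : (Orb G o u).Finite := by
  refine Set.Finite.subset (ball_finite hconn hlf o (G.dist o u)) ?_
  intro w hw
  exact le_of_eq (Orb_dist hconn hw)

lemma Orb_eq_of_mem {o u w : V} (hw : w ∈ Orb G o u) : Orb G o w = Orb G o u := by
  obtain ⟨φ, hφo, hφu⟩ := hw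
  have hsymm : φ.symm o = o := by
    have h := φ.symm_apply_apply o
    rwa [hφo] at h
  have hsymw : φ.symm w = u := by
    have h := φ.symm_apply_apply u
    rwa [hφu] at h
  ext z
  constructor
  · rintro ⟨ψ, hψo, hψw⟩
    exact ⟨φ.trans ψ, show ψ (φ o) = o by rw [hφo, hψo],
      show ψ (φ u) = z by rw [hφu, hψw]⟩
  · rintro ⟨ψ, hψo, hψu⟩
    exact ⟨φ.symm.trans ψ, show ψ (φ.symm o) = o by rw [hsymm, hψo],
      show ψ (φ.symm w) = z by rw [hsymw, hψu]⟩

noncomputable def mu (G : SimpleGraph V) (o u : V) : ℕ := (Orb G o u).ncard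

lemma mu_pos (hconn : G.Connected) (hlf : ∀ v : V, (G.neighborSet v).Finite)
    (o u : V) : 0 < mu G o u := by
  rw [mu]
  rw [Set.ncard_pos (Orb_finite hconn hlf o u)]
  exact ⟨u, mem_Orb_self o u⟩

lemma mu_eq_of_mem {o u w : V} (hw : w ∈ Orb G o u) : mu G o w = mu G o u := by
  rw [mu, mu, Orb_eq_of_mem hw]

lemma Orb_image (φ : G ≃g G) (x y : V) : Orb G (φ x) (φ y) = φ '' Orb G x y := by
  ext w
  constructor
  · rintro ⟨ψ, h1, h2⟩
    refine ⟨(φ.trans ψ).trans φ.symm y, ⟨(φ.trans ψ).trans φ.symm, ?_, rfl⟩, ?_⟩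
    · show φ.symm (ψ (φ x)) = x
      rw [h1]; simp
    · show φ (φ.symm (ψ (φ y))) = w
      rw [h2]; simp
  · rintro ⟨z, ⟨σ, hσ1, hσ2⟩, rfl⟩
    refine ⟨(φ.symm.trans σ).trans φ, ?_, ?_⟩
    · show φ (σ (φ.symm (φ x))) = φ x
      simp [hσ1]
    · show φ (σ (φ.symm (φ y))) = φ z
      simp [hσ2]

lemma mu_iso (φ : G ≃g G) (x y : V) : mu G (φ x) (φ y) = mu G x y := by
  rw [mu, mu, Orb_image]
  exact Set.ncard_image_of_injective _ φ.injective

/-- counting/summation helpers over orbits sitting inside a finset -/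
lemma orb_filter_eq (hconn : G.Connected) (hlf : ∀ v : V, (G.neighborSet v).Finite)
    {b z : V} {Bf : Finset V} (hsub : ∀ w ∈ Orb G b z, w ∈ Bf)
    (P : V → Prop) [DecidablePred P] (hP : ∀ x, P x ↔ x ∈ Orb G b z) :
    Bf.filter P = (Orb_finite hconn hlf b z).toFinset := by
  ext x
  simp only [Finset.mem_filter, Set.Finite.mem_toFinset]
  constructor
  · rintro ⟨-, h⟩; exact (hP x).mp h
  · intro h; exact ⟨hsub x h, (hP x).mpr h⟩

lemma orb_count (hconn : G.Connected) (hlf : ∀ v : V, (G.neighborSet v).Finite)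
    {b z : V} {Bf : Finset V} (hsub : ∀ w ∈ Orb G b z, w ∈ Bf)
    (P : V → Prop) [DecidablePred P] (hP : ∀ x, P x ↔ x ∈ Orb G b z) :
    (Bf.filter P).card = mu G b z := by
  rw [orb_filter_eq hconn hlf hsub P hP,
    mu, Set.ncard_eq_toFinset_card _ (Orb_finite hconn hlf b z)]

lemma orb_sum (hconn : G.Connected) (hlf : ∀ v : V, (G.neighborSet v).Finite)
    {b z : V} {Bf : Finset V} (hsub : ∀ w ∈ Orb G b z, w ∈ Bf)
    (P : V → Prop) [DecidablePred P] (hP : ∀ x, P x ↔ x ∈ Orb G b z) :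
    (∑ x ∈ Bf, if P x then ((mu G b x : ℝ))⁻¹ else 0) = 1 := by
  rw [← Finset.sum_filter, orb_filter_eq hconn hlf hsub P hP]
  have hconst : ∀ x ∈ (Orb_finite hconn hlf b z).toFinset, ((mu G b x : ℝ))⁻¹
      = ((mu G b z : ℝ))⁻¹ := by
    intro x hx
    rw [Set.Finite.mem_toFinset] at hx
    rw [mu_eq_of_mem hx]
  rw [Finset.sum_congr rfl hconst, Finset.sum_const]
  have hcard : (Orb_finite hconn hlf b z).toFinset.card = mu G b z := by
    rw [mu, Set.ncard_eq_toFinset_card _ (Orb_finite hconn hlf b z)]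
  rw [hcard, nsmul_eq_mul]
  have : (mu G b z : ℝ) ≠ 0 := by
    exact_mod_cast (mu_pos hconn hlf b z).ne'
  field_simp

/-- The mass transport identity in the unimodular case. -/
lemma mtp (hconn : G.Connected) (hlf : ∀ v : V, (G.neighborSet v).Finite)
    (htrans : ∀ u v : V, ∃ φ : G ≃g G, φ u = v)
    (hsym : ∀ x y : V, mu G x y = mu G y x)
    (f : V → V → ℝ) (hinv : ∀ (φ : G ≃g G) (x y : V), f (φ x) (φ y) = f x y)
    (b : V) (n : ℕ) :
    ∑ v ∈ (ball_finite hconn hlf b n).toFinset, f b v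
      = ∑ u ∈ (ball_finite hconn hlf b n).toFinset, f u b := by
  classical
  set Bf := (ball_finite hconn hlf b n).toFinset with hBf
  have hmemBf : ∀ x : V, x ∈ Bf ↔ G.dist b x ≤ n := by
    intro x; rw [hBf, Set.Finite.mem_toFinset]; exact Iff.rfl
  set Rel : V → V → Prop := fun v u => ∃ φ : G ≃g G, φ v = b ∧ φ b = u with hRel
  -- Step A
  have stepA : ∀ v ∈ Bf, (∑ u ∈ Bf, if Rel v u then ((mu G b u : ℝ))⁻¹ else 0) = 1 := by
    intro v hv
    obtain ⟨γ, hγ⟩ := htrans v b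
    have hP : ∀ x, Rel v x ↔ x ∈ Orb G b (γ b) := by
      intro x
      constructor
      · rintro ⟨φ, hφv, hφb⟩
        have hsv : γ.symm b = v := by rw [← hγ]; exact γ.symm_apply_apply v
        refine ⟨γ.symm.trans φ, ?_, ?_⟩
        · show φ (γ.symm b) = b
          rw [hsv, hφv]
        · show φ (γ.symm (γ b)) = x
          rw [γ.symm_apply_apply, hφb]
      · rintro ⟨σ, hσb, hσz⟩
        refine ⟨γ.trans σ, ?_, ?_⟩
        · show σ (γ v) = b
          rw [hγ, hσb]
        · show σ (γ b) = x
          exact hσz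
    have hsub : ∀ w ∈ Orb G b (γ b), w ∈ Bf := by
      intro w hw
      rw [hmemBf, Orb_dist hconn hw]
      have h1 : G.dist b (γ b) = G.dist v b := by
        calc G.dist b (γ b) = G.dist (γ v) (γ b) := by rw [hγ]
          _ = G.dist v b := iso_dist hconn γ v b
      rw [h1, SimpleGraph.dist_comm]
      exact (hmemBf v).mp hv
    exact orb_sum hconn hlf hsub (Rel v) hP
  -- Step C
  have stepC : ∀ u ∈ Bf, ((Bf.filter (fun v => Rel v u)).card : ℝ) = (mu G b u : ℝ) := by
    intro u hu
    obtain ⟨γ, hγ⟩ := htrans b u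
    have hP : ∀ v, Rel v u ↔ v ∈ Orb G b (γ.symm b) := by
      intro v
      constructor
      · rintro ⟨φ, hφv, hφb⟩
        refine ⟨γ.trans φ.symm, ?_, ?_⟩
        · show φ.symm (γ b) = b
          rw [hγ, ← hφb]; exact φ.symm_apply_apply b
        · show φ.symm (γ (γ.symm b)) = v
          rw [γ.apply_symm_apply, ← hφv]; exact φ.symm_apply_apply v
      · rintro ⟨σ, hσb, hσz⟩
        refine ⟨σ.symm.trans γ, ?_, ?_⟩
        · show γ (σ.symm v) = b
          rw [← hσz, σ.symm_apply_apply, γ.apply_symm_apply]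
        · show γ (σ.symm b) = u
          conv_lhs => rw [← hσb, σ.symm_apply_apply, hγ]
    have hsub : ∀ w ∈ Orb G b (γ.symm b), w ∈ Bf := by
      intro w hw
      rw [hmemBf, Orb_dist hconn hw]
      have h1 : G.dist b (γ.symm b) = G.dist u b := by
        calc G.dist b (γ.symm b) = G.dist (γ b) (γ (γ.symm b)) :=
              (iso_dist hconn γ b (γ.symm b)).symm
          _ = G.dist u b := by rw [hγ, γ.apply_symm_apply]
      rw [h1, SimpleGraph.dist_comm]
      exact (hmemBf u).mp hu
    have hcnt := orb_count hconn hlf hsub (fun v => Rel v u) hP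
    rw [hcnt]
    have h2 : mu G b (γ.symm b) = mu G u b := by
      have h3 := mu_iso γ b (γ.symm b)
      rw [hγ, γ.apply_symm_apply] at h3
      exact h3.symm
    rw [h2, hsym u b]
  -- final calc
  have key : ∀ v ∈ Bf, ∀ u ∈ Bf,
      (if Rel v u then f b v * ((mu G b u : ℝ))⁻¹ else 0)
        = (if Rel v u then f u b * ((mu G b u : ℝ))⁻¹ else 0) := by
    intro v hv u hu
    split_ifs with h
    · obtain ⟨φ, hφv, hφb⟩ := h
      have h4 := hinv φ b v
      rw [hφv, hφb] at h4
      rw [h4.symm]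
    · rfl
  calc ∑ v ∈ Bf, f b v
      = ∑ v ∈ Bf, f b v * (∑ u ∈ Bf, if Rel v u then ((mu G b u : ℝ))⁻¹ else 0) := by
        refine Finset.sum_congr rfl ?_
        intro v hv
        rw [stepA v hv, mul_one]
    _ = ∑ v ∈ Bf, ∑ u ∈ Bf, (if Rel v u then f b v * ((mu G b u : ℝ))⁻¹ else 0) := by
        refine Finset.sum_congr rfl ?_
        intro v hv
        rw [Finset.mul_sum]
        exact Finset.sum_congr rfl fun u hu => by rw [mul_ite, mul_zero]
    _ = ∑ v ∈ Bf, ∑ u ∈ Bf, (if Rel v u then f u b * ((mu G b u : ℝ))⁻¹ else 0) :=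
        Finset.sum_congr rfl fun v hv => Finset.sum_congr rfl fun u hu => key v hv u hu
    _ = ∑ u ∈ Bf, ∑ v ∈ Bf, (if Rel v u then f u b * ((mu G b u : ℝ))⁻¹ else 0) :=
        Finset.sum_comm
    _ = ∑ u ∈ Bf, f u b := by
        refine Finset.sum_congr rfl ?_
        intro u hu
        rw [← Finset.sum_filter, Finset.sum_const, nsmul_eq_mul]
        have hmu : ((mu G b u : ℝ)) ≠ 0 := by
          exact_mod_cast (mu_pos hconn hlf b u).ne'
        rw [stepC u hu]
        field_simp


lemma getVert_map (φ : G →g G) {x v : V} (p : G.Walk x v) (j : ℕ) :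
    (p.map φ).getVert j = φ (p.getVert j) := by
  induction p generalizing j with
  | nil => simp [SimpleGraph.Walk.getVert]
  | cons h q ih =>
    cases j with
    | zero => simp [SimpleGraph.Walk.getVert]
    | succ j =>
      simp only [SimpleGraph.Walk.map_cons, SimpleGraph.Walk.getVert_cons_succ]
      exact ih j


lemma walk_exit (K : Set V) {u v : V} (p : G.Walk u v) (hu : u ∈ K) (hv : v ∉ K) :
    ∃ j, j ≤ p.length ∧ p.getVert j ∈ innerBoundary G K := by
  induction p with
  | nil => exact absurd hu hv
  | @cons a b c h q ih =>
    by_cases hb : b ∈ K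
    · obtain ⟨j, hj1, hj2⟩ := ih hb hv
      refine ⟨j + 1, by rw [SimpleGraph.Walk.length_cons]; omega, ?_⟩
      rwa [SimpleGraph.Walk.getVert_cons_succ]
    · exact ⟨0, Nat.zero_le _, by
        rw [SimpleGraph.Walk.getVert_zero]
        exact ⟨hu, b, h, hb⟩⟩


lemma innerBoundary_finite {K : Set V} (hK : K.Finite) : (innerBoundary G K).Finite :=
  hK.subset (fun _ hx => hx.1)


/-- the orbit relation generated by a pair `(p,q)` -/
def ERel (G : SimpleGraph V) (p q x y : V) : Prop :=
  ∃ φ : G ≃g G, φ p = x ∧ φ q = y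

lemma ERel_dist (hconn : G.Connected) {p q x y : V} (h : ERel G p q x y) :
    G.dist x y = G.dist p q := by
  obtain ⟨φ, h1, h2⟩ := h
  rw [← h1, ← h2, iso_dist hconn]

lemma ERel_out (htrans : ∀ u v : V, ∃ φ : G ≃g G, φ u = v) (p q x : V) :
    ∃ z : V, {y | ERel G p q x y} = Orb G x z ∧ mu G x z = mu G p q := by
  obtain ⟨γ, hγ⟩ := htrans p x
  refine ⟨γ q, ?_, ?_⟩
  · ext y
    constructor
    · rintro ⟨φ, h1, h2⟩
      have hsp : γ.symm x = p := by rw [← hγ]; exact γ.symm_apply_apply p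
      refine ⟨γ.symm.trans φ, ?_, ?_⟩
      · show φ (γ.symm x) = x
        rw [hsp, h1]
      · show φ (γ.symm (γ q)) = y
        rw [γ.symm_apply_apply, h2]
    · rintro ⟨σ, h1, h2⟩
      refine ⟨γ.trans σ, ?_, ?_⟩
      · show σ (γ p) = x
        rw [hγ, h1]
      · show σ (γ q) = y
        exact h2
  · rw [← hγ]
    exact mu_iso γ p q

lemma ERel_in (htrans : ∀ u v : V, ∃ φ : G ≃g G, φ u = v) (p q y : V) :
    ∃ z : V, {x | ERel G p q x y} = Orb G y z ∧ mu G y z = mu G q p := by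
  obtain ⟨δ, hδ⟩ := htrans q y
  refine ⟨δ p, ?_, ?_⟩
  · ext x
    constructor
    · rintro ⟨φ, h1, h2⟩
      have hsq : δ.symm y = q := by rw [← hδ]; exact δ.symm_apply_apply q
      refine ⟨δ.symm.trans φ, ?_, ?_⟩
      · show φ (δ.symm y) = y
        rw [hsq, h2]
      · show φ (δ.symm (δ p)) = x
        rw [δ.symm_apply_apply, h1]
    · rintro ⟨σ, h1, h2⟩
      refine ⟨δ.trans σ, ?_, ?_⟩
      · show σ (δ p) = x
        exact h2
      · show σ (δ q) = y
        rw [hδ, h1]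
  · rw [← hδ]
    exact mu_iso δ q p

/-- The linear isoperimetric inequality in the non-unimodular case. -/
lemma csc_nonunimodular (hconn : G.Connected) (hlf : ∀ v : V, (G.neighborSet v).Finite)
    (htrans : ∀ u v : V, ∃ φ : G ≃g G, φ u = v)
    (hns : ∃ p q : V, mu G p q ≠ mu G q p) :
    ∃ C : ℕ, 0 < C ∧ ∀ K : Set V, K.Finite → K.Nonempty →
      K.ncard ≤ C * (innerBoundary G K).ncard := by
  classical
  -- wlog mu p q < mu q p
  obtain ⟨p, q, hpq⟩ := hns
  wlog hlt : mu G p q < mu G q p generalizing p q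
  · exact this q p (Ne.symm hpq) (by omega)
  have hpq_ne : p ≠ q := by
    intro h
    subst h
    exact hpq rfl
  set r : ℕ := G.dist p q with hr
  have hrpos : 1 ≤ r := hconn.pos_dist_of_ne hpq_ne
  set br : ℕ := (ball G p (r - 1)).ncard with hbr
  have hbrpos : 0 < br := by
    rw [hbr, Set.ncard_pos (ball_finite hconn hlf p (r-1))]
    exact ⟨p, by simp [ball, SimpleGraph.dist_self]⟩
  refine ⟨mu G q p * br, Nat.mul_pos (mu_pos hconn hlf q p) hbrpos, ?_⟩
  intro K hK hKne
  set Kf : Finset V := hK.toFinset with hKf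
  have hbd : (innerBoundary G K).Finite := innerBoundary_finite hK
  set Bd : Finset V := hbd.toFinset with hBd
  have hKcard : Kf.card = K.ncard := (Set.ncard_eq_toFinset_card _ hK).symm
  have hBdcard : Bd.card = (innerBoundary G K).ncard :=
    (Set.ncard_eq_toFinset_card _ hbd).symm
  -- finiteness of in-sets
  have hinfin : ∀ y : V, {x | ERel G p q x y}.Finite := by
    intro y
    refine Set.Finite.subset (ball_finite hconn hlf y r) ?_
    intro x hx
    have := ERel_dist hconn hx
    show G.dist y x ≤ r
    rw [SimpleGraph.dist_comm]
    omega
  set inF : V → Finset V := fun y => (hinfin y).toFinset with hinF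
  have hincard : ∀ y : V, (inF y).card = mu G q p := by
    intro y
    obtain ⟨z, hzset, hzmu⟩ := ERel_in htrans p q y
    rw [hinF]
    have : (hinfin y).toFinset.card = {x | ERel G p q x y}.ncard :=
      (Set.ncard_eq_toFinset_card _ (hinfin y)).symm
    rw [this, hzset, ← hzmu]
    rfl
  -- the A/B split
  have hsplit : ∀ y : V, (inF y).card
      = ((inF y).filter (fun x => x ∈ Kf)).card
        + ((inF y).filter (fun x => x ∉ Kf)).card := by
    intro y
    exact (Finset.card_filter_add_card_filter_not (fun x => x ∈ Kf)).symm
  -- bound for the A part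
  have hA : ∑ y ∈ Kf, ((inF y).filter (fun x => x ∈ Kf)).card ≤ mu G p q * Kf.card := by
    have h1 : ∀ y ∈ Kf, ((inF y).filter (fun x => x ∈ Kf)).card
        = (Kf.filter (fun x => ERel G p q x y)).card := by
      intro y _
      congr 1
      ext x
      simp only [Finset.mem_filter, hinF, Set.Finite.mem_toFinset, Set.mem_setOf_eq]
      tauto
    rw [Finset.sum_congr rfl h1]
    have h2 : ∑ y ∈ Kf, (Kf.filter (fun x => ERel G p q x y)).card
        = ∑ x ∈ Kf, (Kf.filter (fun y => ERel G p q x y)).card := by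
      simp only [Finset.card_filter]
      rw [Finset.sum_comm]
    rw [h2]
    have h3 : ∀ x ∈ Kf, (Kf.filter (fun y => ERel G p q x y)).card ≤ mu G p q := by
      intro x _
      obtain ⟨z, hzset, hzmu⟩ := ERel_out htrans p q x
      have hsub : Kf.filter (fun y => ERel G p q x y)
          ⊆ (Orb_finite hconn hlf x z).toFinset := by
        intro y hy
        rw [Set.Finite.mem_toFinset, ← hzset]
        exact (Finset.mem_filter.mp hy).2
      calc (Kf.filter (fun y => ERel G p q x y)).card
          ≤ ((Orb_finite hconn hlf x z).toFinset).card := Finset.card_le_card hsub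
        _ = mu G x z := by
            rw [mu]
            exact (Set.ncard_eq_toFinset_card _ _).symm
        _ = mu G p q := hzmu
    calc ∑ x ∈ Kf, (Kf.filter (fun y => ERel G p q x y)).card
        ≤ ∑ _x ∈ Kf, mu G p q := Finset.sum_le_sum h3
      _ = mu G p q * Kf.card := by rw [Finset.sum_const, smul_eq_mul, mul_comm]
  -- bound for the B part
  have hD : ∀ y ∈ Kf, ((inF y).filter (fun x => x ∉ Kf)).card ≠ 0 →
      y ∈ Bd.biUnion (fun b => (ball_finite hconn hlf b (r-1)).toFinset) := by
    intro y hy hBne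
    have hBne' : ((inF y).filter (fun x => x ∉ Kf)).Nonempty :=
      Finset.card_pos.mp (Nat.pos_of_ne_zero hBne)
    obtain ⟨x, hx⟩ := hBne'
    rw [Finset.mem_filter, hinF, Set.Finite.mem_toFinset] at hx
    obtain ⟨hxE, hxK⟩ := hx
    have hxKset : x ∉ K := by
      intro hc
      exact hxK (by rwa [hKf, Set.Finite.mem_toFinset])
    have hyK : y ∈ K := by rwa [hKf, Set.Finite.mem_toFinset] at hy
    have hdyx : G.dist y x = r := by
      rw [SimpleGraph.dist_comm]
      exact ERel_dist hconn hxE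
    obtain ⟨w, hw⟩ := hconn.exists_walk_length_eq_dist y x
    obtain ⟨j, hj1, hj2⟩ := walk_exit K w hyK hxKset
    have hjr : j ≤ r - 1 := by
      rcases Nat.lt_or_ge j (w.length) with h | h
      · rw [hw, hdyx] at h
        omega
      · exfalso
        have : w.getVert j = x := w.getVert_of_length_le h
        rw [this] at hj2
        exact hxKset hj2.1
    rw [Finset.mem_biUnion]
    refine ⟨w.getVert j, by rwa [hBd, Set.Finite.mem_toFinset], ?_⟩
    rw [Set.Finite.mem_toFinset]
    show G.dist (w.getVert j) y ≤ r - 1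
    rw [SimpleGraph.dist_comm]
    exact le_trans (dist_getVert_le hconn w j) hjr
  have hB : ∑ y ∈ Kf, ((inF y).filter (fun x => x ∉ Kf)).card
      ≤ mu G q p * (Bd.card * br) := by
    have hDsub : ∑ y ∈ Kf, ((inF y).filter (fun x => x ∉ Kf)).card
        = ∑ y ∈ Kf.filter (fun y =>
            y ∈ Bd.biUnion (fun b => (ball_finite hconn hlf b (r-1)).toFinset)),
            ((inF y).filter (fun x => x ∉ Kf)).card := by
      refine (Finset.sum_subset (Finset.filter_subset _ _) ?_).symm
      intro y hy hyn
      by_contra hne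
      exact hyn (Finset.mem_filter.mpr ⟨hy, hD y hy hne⟩)
    rw [hDsub]
    have hterm : ∀ y ∈ Kf.filter (fun y =>
        y ∈ Bd.biUnion (fun b => (ball_finite hconn hlf b (r-1)).toFinset)),
        ((inF y).filter (fun x => x ∉ Kf)).card ≤ mu G q p := by
      intro y _
      calc ((inF y).filter (fun x => x ∉ Kf)).card
          ≤ (inF y).card := Finset.card_le_card (Finset.filter_subset _ _)
        _ = mu G q p := hincard y
    calc ∑ y ∈ Kf.filter (fun y =>
          y ∈ Bd.biUnion (fun b => (ball_finite hconn hlf b (r-1)).toFinset)),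
          ((inF y).filter (fun x => x ∉ Kf)).card
        ≤ ∑ _y ∈ Kf.filter (fun y =>
            y ∈ Bd.biUnion (fun b => (ball_finite hconn hlf b (r-1)).toFinset)),
            mu G q p := Finset.sum_le_sum hterm
      _ = (Kf.filter (fun y =>
            y ∈ Bd.biUnion (fun b => (ball_finite hconn hlf b (r-1)).toFinset))).card
            * mu G q p := by rw [Finset.sum_const, smul_eq_mul]
      _ ≤ (Bd.biUnion (fun b => (ball_finite hconn hlf b (r-1)).toFinset)).card
            * mu G q p := by
          refine Nat.mul_le_mul_right _ ?_
          refine Finset.card_le_card ?_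
          intro y hy
          exact (Finset.mem_filter.mp hy).2
      _ ≤ (Bd.card * br) * mu G q p := by
          refine Nat.mul_le_mul_right _ ?_
          calc (Bd.biUnion (fun b => (ball_finite hconn hlf b (r-1)).toFinset)).card
              ≤ ∑ b ∈ Bd, ((ball_finite hconn hlf b (r-1)).toFinset).card :=
                Finset.card_biUnion_le
            _ = ∑ _b ∈ Bd, br := by
                refine Finset.sum_congr rfl ?_
                intro b _
                rw [← Set.ncard_eq_toFinset_card _ (ball_finite hconn hlf b (r-1)), hbr]
                exact ball_ncard_eq hconn htrans b p (r-1)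
            _ = Bd.card * br := by rw [Finset.sum_const, smul_eq_mul]
      _ = mu G q p * (Bd.card * br) := by ring
  -- put together
  have htotal : mu G q p * Kf.card
      ≤ mu G p q * Kf.card + mu G q p * (Bd.card * br) := by
    calc mu G q p * Kf.card = ∑ _y ∈ Kf, mu G q p := by rw [Finset.sum_const, smul_eq_mul, mul_comm]
      _ = ∑ y ∈ Kf, (inF y).card := by
          refine Finset.sum_congr rfl ?_
          intro y _
          rw [hincard y]
      _ = ∑ y ∈ Kf, (((inF y).filter (fun x => x ∈ Kf)).card
            + ((inF y).filter (fun x => x ∉ Kf)).card) := by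
          refine Finset.sum_congr rfl ?_
          intro y _
          exact hsplit y
      _ = (∑ y ∈ Kf, ((inF y).filter (fun x => x ∈ Kf)).card)
            + ∑ y ∈ Kf, ((inF y).filter (fun x => x ∉ Kf)).card := Finset.sum_add_distrib
      _ ≤ mu G p q * Kf.card + mu G q p * (Bd.card * br) := Nat.add_le_add hA hB
  have hstep : mu G p q * Kf.card + Kf.card ≤ mu G q p * Kf.card := by
    have h := Nat.mul_le_mul_right (k := Kf.card) (Nat.succ_le_of_lt hlt)
    rw [Nat.succ_mul] at h
    exact h
  have hfin : Kf.card ≤ mu G q p * (Bd.card * br) := by omega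
  rw [hKcard, hBdcard] at hfin
  calc K.ncard ≤ mu G q p * ((innerBoundary G K).ncard * br) := hfin
    _ = mu G q p * br * (innerBoundary G K).ncard := by ring


end AuxBasic

section AuxGeo

variable {G : SimpleGraph V} [DecidableEq V] [G.LocallyFinite]

/-- the finset of geodesics from `x` to `v` -/
noncomputable def geoF (G : SimpleGraph V) [DecidableEq V] [G.LocallyFinite] (x v : V) :
    Finset (G.Walk x v) :=
  G.finsetWalkLength (G.dist x v) x v

lemma mem_geoF {x v : V} {p : G.Walk x v} : p ∈ geoF G x v ↔ p.length = G.dist x v :=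
  SimpleGraph.mem_finsetWalkLength_iff

/-- number of geodesics -/
noncomputable def Ngeo (G : SimpleGraph V) [DecidableEq V] [G.LocallyFinite] (x v : V) : ℕ :=
  (geoF G x v).card

lemma Ngeo_pos (hconn : G.Connected) (x v : V) : 0 < Ngeo G x v := by
  obtain ⟨p, hp⟩ := hconn.exists_walk_length_eq_dist x v
  exact Finset.card_pos.mpr ⟨p, mem_geoF.mpr hp⟩

/-- count of (geodesic, position) pairs from `x` to `v` visiting `y` -/
noncomputable def cnt (G : SimpleGraph V) [DecidableEq V] [G.LocallyFinite] (x v y : V) : ℕ :=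
  ∑ j ∈ Finset.range (G.dist x v + 1),
    ((geoF G x v).filter (fun p => p.getVert j = y)).card

/-- the congestion function -/
noncomputable def fcon (hconn : G.Connected) (hlf : ∀ v : V, (G.neighborSet v).Finite)
    (n : ℕ) (x y : V) : ℝ :=
  ∑ v ∈ (ball_finite hconn hlf x n).toFinset, (cnt G x v y : ℝ) / (Ngeo G x v : ℝ)

lemma fcon_nonneg (hconn : G.Connected) (hlf : ∀ v : V, (G.neighborSet v).Finite)
    (n : ℕ) (x y : V) : 0 ≤ fcon hconn hlf n x y := by
  apply Finset.sum_nonneg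
  intro v hv
  positivity

/-- a geodesic-position filter count transforms under automorphisms -/
lemma geoF_filter_card (hconn : G.Connected) (φ : G ≃g G) (x v : V) (j : ℕ)
    (Q : V → Prop) [DecidablePred Q] :
    ((geoF G x v).filter (fun p => Q (φ (p.getVert j)))).card
      = ((geoF G (φ x) (φ v)).filter (fun p => Q (p.getVert j))).card := by
  have h1 : φ.symm.toHom (φ x) = x := φ.symm_apply_apply x
  have h2 : φ.symm.toHom (φ v) = v := φ.symm_apply_apply v
  have hcompid' : (φ.toHom.comp φ.symm.toHom : G →g G) = SimpleGraph.Hom.id := by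
    ext a
    exact φ.apply_symm_apply a
  refine Finset.card_bij (fun p _ => p.map φ.toHom) ?_ ?_ ?_
  · intro p hp
    rw [Finset.mem_filter] at hp ⊢
    obtain ⟨hp1, hp2⟩ := hp
    rw [mem_geoF] at hp1
    refine ⟨?_, ?_⟩
    · rw [mem_geoF, SimpleGraph.Walk.length_map, hp1, iso_dist hconn]
    · rw [getVert_map]
      exact hp2
  · intro p hp p' hp' heq
    exact SimpleGraph.Walk.map_injective_of_injective φ.injective x v heq
  · intro q hq
    rw [Finset.mem_filter] at hq
    obtain ⟨hq1, hq2⟩ := hq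
    rw [mem_geoF] at hq1
    refine ⟨(q.map φ.symm.toHom).copy h1 h2, ?_, ?_⟩
    · rw [Finset.mem_filter]
      refine ⟨?_, ?_⟩
      · rw [mem_geoF, SimpleGraph.Walk.length_copy, SimpleGraph.Walk.length_map, hq1]
        exact iso_dist hconn φ x v
      · rw [SimpleGraph.Walk.getVert_copy, getVert_map]
        have h3 : φ (φ.symm.toHom (q.getVert j)) = q.getVert j := φ.apply_symm_apply _
        rw [h3]
        exact hq2
    · show SimpleGraph.Walk.map φ.toHom ((SimpleGraph.Walk.map φ.symm.toHom q).copy h1 h2) = q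
      rw [SimpleGraph.Walk.map_copy, SimpleGraph.Walk.map_map]
      have key : ∀ (f : G →g G), f = SimpleGraph.Hom.id →
          ∀ (hu : f (φ x) = φ x) (hv : f (φ v) = φ v), (q.map f).copy hu hv = q := by
        rintro f rfl hu hv
        rw [SimpleGraph.Walk.map_id]
        rfl
      exact key _ hcompid' _ _

lemma Ngeo_iso (hconn : G.Connected) (φ : G ≃g G) (x v : V) :
    Ngeo G (φ x) (φ v) = Ngeo G x v := by
  have h := geoF_filter_card hconn φ x v 0 (fun _ => True)
  simp only [Finset.filter_true] at h
  rw [Ngeo, Ngeo]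
  exact h.symm

lemma cnt_iso (hconn : G.Connected) (φ : G ≃g G) (x v y : V) :
    cnt G (φ x) (φ v) (φ y) = cnt G x v y := by
  rw [cnt, cnt, iso_dist hconn]
  refine Finset.sum_congr rfl ?_
  intro j hj
  have h := geoF_filter_card hconn φ x v j (fun z => z = φ y)
  rw [← h]
  congr 1
  apply Finset.filter_congr
  intro p hp
  constructor
  · intro h2
    exact φ.injective h2
  · intro h2
    rw [h2]


lemma fcon_iso (hconn : G.Connected) (hlf : ∀ v : V, (G.neighborSet v).Finite)
    (n : ℕ) (φ : G ≃g G) (x y : V) :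
    fcon hconn hlf n (φ x) (φ y) = fcon hconn hlf n x y := by
  rw [fcon, fcon]
  refine Finset.sum_nbij' (fun v' => φ.symm v') (fun v => φ v) ?_ ?_ ?_ ?_ ?_
  · intro a ha
    rw [Set.Finite.mem_toFinset] at ha ⊢
    have : G.dist x (φ.symm a) = G.dist (φ x) a := by
      calc G.dist x (φ.symm a) = G.dist (φ x) (φ (φ.symm a)) :=
            (iso_dist hconn φ x (φ.symm a)).symm
        _ = G.dist (φ x) a := by rw [φ.apply_symm_apply]
    rw [mem_ball_iff, this]
    exact ha
  · intro a ha
    rw [Set.Finite.mem_toFinset] at ha ⊢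
    rw [mem_ball_iff, iso_dist hconn]
    exact ha
  · intro a _
    exact φ.apply_symm_apply a
  · intro a _
    exact φ.symm_apply_apply a
  · intro a ha
    have h1 : cnt G (φ x) a (φ y) = cnt G x (φ.symm a) y := by
      have := cnt_iso hconn φ x (φ.symm a) y
      rwa [φ.apply_symm_apply] at this
    have h2 : Ngeo G (φ x) a = Ngeo G x (φ.symm a) := by
      have := Ngeo_iso hconn φ x (φ.symm a)
      rwa [φ.apply_symm_apply] at this
    rw [h1, h2]

lemma mem_ballF_iff (hconn : G.Connected) (hlf : ∀ v : V, (G.neighborSet v).Finite)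
    {x : V} {n : ℕ} {v : V} :
    v ∈ (ball_finite hconn hlf x n).toFinset ↔ G.dist x v ≤ n := by
  rw [Set.Finite.mem_toFinset]; exact Iff.rfl

lemma cnt_zero_of_far (hconn : G.Connected) {n : ℕ} {x v y : V}
    (hv : G.dist x v ≤ n) (hxy : n < G.dist x y) : cnt G x v y = 0 := by
  rw [cnt]
  refine Finset.sum_eq_zero ?_
  intro j hj
  rw [Finset.mem_range] at hj
  rw [Finset.card_eq_zero, Finset.filter_eq_empty_iff]
  intro p hp heq
  have h1 := dist_getVert_le hconn p j
  rw [heq] at h1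
  omega

lemma fcon_supp (hconn : G.Connected) (hlf : ∀ v : V, (G.neighborSet v).Finite)
    {n : ℕ} {x y : V} (hxy : n < G.dist x y) : fcon hconn hlf n x y = 0 := by
  rw [fcon]
  refine Finset.sum_eq_zero ?_
  intro v hv
  rw [mem_ballF_iff hconn hlf] at hv
  rw [cnt_zero_of_far hconn hv hxy]
  simp

lemma cnt_row (hconn : G.Connected) (hlf : ∀ v : V, (G.neighborSet v).Finite)
    {n : ℕ} {x v : V} (hv : G.dist x v ≤ n) :
    ∑ y ∈ (ball_finite hconn hlf x n).toFinset, cnt G x v y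
      = (G.dist x v + 1) * Ngeo G x v := by
  rw [show (∑ y ∈ (ball_finite hconn hlf x n).toFinset, cnt G x v y)
      = ∑ y ∈ (ball_finite hconn hlf x n).toFinset, ∑ j ∈ Finset.range (G.dist x v + 1),
        ((geoF G x v).filter (fun p => p.getVert j = y)).card from rfl]
  rw [Finset.sum_comm]
  have hfib : ∀ j ∈ Finset.range (G.dist x v + 1),
      ∑ y ∈ (ball_finite hconn hlf x n).toFinset,
        ((geoF G x v).filter (fun p => p.getVert j = y)).card = Ngeo G x v := by
    intro j hj
    rw [Finset.mem_range] at hj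
    rw [Ngeo]
    refine (Finset.card_eq_sum_card_fiberwise ?_).symm
    intro p hp
    show p.getVert j ∈ ((ball_finite hconn hlf x n).toFinset : Set V)
    rw [Finset.mem_coe, mem_ballF_iff hconn hlf]
    have := dist_getVert_le hconn p j
    omega
  rw [Finset.sum_congr rfl hfib, Finset.sum_const, Finset.card_range]
  simp [mul_comm]

lemma fcon_row (hconn : G.Connected) (hlf : ∀ v : V, (G.neighborSet v).Finite)
    (n : ℕ) (x : V) :
    ∑ y ∈ (ball_finite hconn hlf x n).toFinset, fcon hconn hlf n x y
      = ∑ v ∈ (ball_finite hconn hlf x n).toFinset, ((G.dist x v : ℝ) + 1) := by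
  rw [show (∑ y ∈ (ball_finite hconn hlf x n).toFinset, fcon hconn hlf n x y)
      = ∑ y ∈ (ball_finite hconn hlf x n).toFinset,
          ∑ v ∈ (ball_finite hconn hlf x n).toFinset,
            (cnt G x v y : ℝ) / (Ngeo G x v : ℝ) from rfl]
  rw [Finset.sum_comm]
  refine Finset.sum_congr rfl ?_
  intro v hv
  rw [mem_ballF_iff hconn hlf] at hv
  rw [← Finset.sum_div]
  have : ((∑ y ∈ (ball_finite hconn hlf x n).toFinset, cnt G x v y : ℕ) : ℝ)
      = ∑ y ∈ (ball_finite hconn hlf x n).toFinset, (cnt G x v y : ℝ) := by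
    push_cast
    rfl
  rw [← this, cnt_row hconn hlf hv]
  have hN : ((Ngeo G x v : ℕ) : ℝ) ≠ 0 := by
    exact_mod_cast (Ngeo_pos hconn x v).ne'
  push_cast
  field_simp

lemma crossing (hconn : G.Connected) {K : Set V} (hbd : (innerBoundary G K).Finite)
    {u v : V} (hu : u ∈ K) (hv : v ∉ K) :
    Ngeo G u v ≤ ∑ b ∈ hbd.toFinset, cnt G u v b := by
  have hswap : ∑ b ∈ hbd.toFinset, cnt G u v b
      = ∑ j ∈ Finset.range (G.dist u v + 1),
          ∑ b ∈ hbd.toFinset, ((geoF G u v).filter (fun p => p.getVert j = b)).card := by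
    rw [show (∑ b ∈ hbd.toFinset, cnt G u v b)
        = ∑ b ∈ hbd.toFinset, ∑ j ∈ Finset.range (G.dist u v + 1),
            ((geoF G u v).filter (fun p => p.getVert j = b)).card from rfl]
    rw [Finset.sum_comm]
  rw [hswap]
  have hstep : ∀ j ∈ Finset.range (G.dist u v + 1),
      ((geoF G u v).filter (fun p => p.getVert j ∈ hbd.toFinset)).card
        ≤ ∑ b ∈ hbd.toFinset, ((geoF G u v).filter (fun p => p.getVert j = b)).card := by
    intro j hj
    have h1 : ((geoF G u v).filter (fun p => p.getVert j ∈ hbd.toFinset)).card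
        = ∑ b ∈ hbd.toFinset,
            (((geoF G u v).filter (fun p => p.getVert j ∈ hbd.toFinset)).filter
              (fun p => p.getVert j = b)).card :=
      Finset.card_eq_sum_card_fiberwise (fun p hp => (Finset.mem_filter.mp hp).2)
    rw [h1]
    refine Finset.sum_le_sum ?_
    intro b hb
    refine Finset.card_le_card ?_
    intro p hp
    rw [Finset.mem_filter] at hp ⊢
    exact ⟨(Finset.mem_filter.mp hp.1).1, hp.2⟩
  have hcover : Ngeo G u v ≤ ∑ j ∈ Finset.range (G.dist u v + 1),
      ((geoF G u v).filter (fun p => p.getVert j ∈ hbd.toFinset)).card := by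
    rw [Ngeo]
    calc (geoF G u v).card
        ≤ ((Finset.range (G.dist u v + 1)).biUnion
            (fun j => (geoF G u v).filter (fun p => p.getVert j ∈ hbd.toFinset))).card := by
          refine Finset.card_le_card ?_
          intro p hp
          obtain ⟨j, hj1, hj2⟩ := walk_exit K p hu hv
          rw [Finset.mem_biUnion]
          have hlen : p.length = G.dist u v := mem_geoF.mp hp
          refine ⟨j, Finset.mem_range.mpr (by omega), ?_⟩
          rw [Finset.mem_filter]
          exact ⟨hp, by rwa [Set.Finite.mem_toFinset]⟩
      _ ≤ ∑ j ∈ Finset.range (G.dist u v + 1),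
            ((geoF G u v).filter (fun p => p.getVert j ∈ hbd.toFinset)).card :=
          Finset.card_biUnion_le
  exact hcover.trans (Finset.sum_le_sum hstep)


/-- The Coulhon--Saloff-Coste inequality, unimodular case. -/
lemma csc_unimodular (hconn : G.Connected) (hlf : ∀ v : V, (G.neighborSet v).Finite)
    (htrans : ∀ u v : V, ∃ φ : G ≃g G, φ u = v)
    (hsym : ∀ x y : V, mu G x y = mu G y x)
    (o : V) {K : Set V} (hK : K.Finite) (hKne : K.Nonempty) {n : ℕ}
    (hbig : 2 * K.ncard ≤ (ball G o n).ncard) :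
    (K.ncard : ℝ) ≤ 2 * ((n : ℝ) + 1) * ((innerBoundary G K).ncard : ℝ) := by
  classical
  set Kf : Finset V := hK.toFinset with hKf
  have hbd : (innerBoundary G K).Finite := innerBoundary_finite hK
  set Bd : Finset V := hbd.toFinset with hBd
  set k : ℕ := K.ncard with hk
  set bn : ℕ := (ball G o n).ncard with hbn
  have hKcard : Kf.card = k := (Set.ncard_eq_toFinset_card _ hK).symm
  have hBdcard : Bd.card = (innerBoundary G K).ncard :=
    (Set.ncard_eq_toFinset_card _ hbd).symm
  have hbcard : ∀ x : V, ((ball_finite hconn hlf x n).toFinset).card = bn := by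
    intro x
    rw [← Set.ncard_eq_toFinset_card _ (ball_finite hconn hlf x n), hbn]
    exact ball_ncard_eq hconn htrans x o n
  have hkpos : 1 ≤ k := by
    have := (Set.ncard_pos hK).mpr hKne
    omega
  -- the congestion sum
  set S : ℝ := ∑ b ∈ Bd, ∑ x ∈ (ball_finite hconn hlf b n).toFinset, fcon hconn hlf n x b
    with hS
  -- upper bound for S
  have hupper : S ≤ (Bd.card : ℝ) * (((n : ℝ) + 1) * (bn : ℝ)) := by
    rw [hS]
    have hper : ∀ b ∈ Bd, ∑ x ∈ (ball_finite hconn hlf b n).toFinset, fcon hconn hlf n x b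
        ≤ ((n : ℝ) + 1) * (bn : ℝ) := by
      intro b _
      have h1 := mtp hconn hlf htrans hsym (fcon hconn hlf n) (fcon_iso hconn hlf n) b n
      have h2 := fcon_row hconn hlf n b
      calc ∑ x ∈ (ball_finite hconn hlf b n).toFinset, fcon hconn hlf n x b
          = ∑ v ∈ (ball_finite hconn hlf b n).toFinset, fcon hconn hlf n b v := h1.symm
        _ = ∑ v ∈ (ball_finite hconn hlf b n).toFinset, ((G.dist b v : ℝ) + 1) := h2
        _ ≤ ∑ _v ∈ (ball_finite hconn hlf b n).toFinset, ((n : ℝ) + 1) := by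
            refine Finset.sum_le_sum ?_
            intro v hv
            have := (mem_ballF_iff hconn hlf).mp hv
            have : (G.dist b v : ℝ) ≤ (n : ℝ) := by exact_mod_cast this
            linarith
        _ = ((ball_finite hconn hlf b n).toFinset.card : ℝ) * ((n : ℝ) + 1) := by
            rw [Finset.sum_const, nsmul_eq_mul]
        _ = ((n : ℝ) + 1) * (bn : ℝ) := by rw [hbcard b]; ring
    calc ∑ b ∈ Bd, ∑ x ∈ (ball_finite hconn hlf b n).toFinset, fcon hconn hlf n x b
        ≤ ∑ _b ∈ Bd, ((n : ℝ) + 1) * (bn : ℝ) := Finset.sum_le_sum hper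
      _ = (Bd.card : ℝ) * (((n : ℝ) + 1) * (bn : ℝ)) := by
          rw [Finset.sum_const, nsmul_eq_mul]
  -- lower bound for S
  have hlower : (k : ℝ) * ((bn : ℝ) - (k : ℝ)) ≤ S := by
    have hstep1 : ∀ b ∈ Bd, ∑ x ∈ Kf, fcon hconn hlf n x b
        ≤ ∑ x ∈ (ball_finite hconn hlf b n).toFinset, fcon hconn hlf n x b := by
      intro b _
      have heq : ∑ x ∈ Kf ∩ (ball_finite hconn hlf b n).toFinset, fcon hconn hlf n x b
          = ∑ x ∈ Kf, fcon hconn hlf n x b := by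
        refine Finset.sum_subset Finset.inter_subset_left ?_
        intro x hx hxn
        have hxball : x ∉ (ball_finite hconn hlf b n).toFinset := by
          intro hc
          exact hxn (Finset.mem_inter.mpr ⟨hx, hc⟩)
        rw [mem_ballF_iff hconn hlf] at hxball
        refine fcon_supp hconn hlf ?_
        rw [SimpleGraph.dist_comm]
        omega
      rw [← heq]
      refine Finset.sum_le_sum_of_subset_of_nonneg Finset.inter_subset_right ?_
      intro x _ _
      exact fcon_nonneg hconn hlf n x b
    have hstep2 : ∀ u ∈ Kf, ((bn : ℝ) - (k : ℝ)) ≤ ∑ b ∈ Bd, fcon hconn hlf n u b := by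
      intro u hu
      have huK : u ∈ K := by rwa [hKf, Set.Finite.mem_toFinset] at hu
      have hswap : ∑ b ∈ Bd, fcon hconn hlf n u b
          = ∑ v ∈ (ball_finite hconn hlf u n).toFinset,
              (∑ b ∈ Bd, (cnt G u v b : ℝ)) / (Ngeo G u v : ℝ) := by
        rw [show (∑ b ∈ Bd, fcon hconn hlf n u b)
            = ∑ b ∈ Bd, ∑ v ∈ (ball_finite hconn hlf u n).toFinset,
                (cnt G u v b : ℝ) / (Ngeo G u v : ℝ) from rfl]
        rw [Finset.sum_comm]
        refine Finset.sum_congr rfl ?_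
        intro v _
        rw [Finset.sum_div]
      rw [hswap]
      have hsub : ((ball_finite hconn hlf u n).toFinset \ Kf)
          ⊆ (ball_finite hconn hlf u n).toFinset := Finset.sdiff_subset
      have hterm : ∀ v ∈ (ball_finite hconn hlf u n).toFinset \ Kf,
          (1 : ℝ) ≤ (∑ b ∈ Bd, (cnt G u v b : ℝ)) / (Ngeo G u v : ℝ) := by
        intro v hv
        rw [Finset.mem_sdiff] at hv
        have hvK : v ∉ K := by
          intro hc
          exact hv.2 (by rwa [hKf, Set.Finite.mem_toFinset])
        have hcross := crossing hconn hbd huK hvK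
        have hNpos : (0 : ℝ) < (Ngeo G u v : ℝ) := by
          exact_mod_cast Ngeo_pos hconn u v
        rw [le_div_iff₀ hNpos, one_mul]
        have : ((Ngeo G u v : ℕ) : ℝ) ≤ ((∑ b ∈ Bd, cnt G u v b : ℕ) : ℝ) := by
          exact_mod_cast hcross
        calc (Ngeo G u v : ℝ) ≤ ((∑ b ∈ Bd, cnt G u v b : ℕ) : ℝ) := this
          _ = ∑ b ∈ Bd, (cnt G u v b : ℝ) := by push_cast; rfl
      have hge : (((ball_finite hconn hlf u n).toFinset \ Kf).card : ℝ)
          ≤ ∑ v ∈ (ball_finite hconn hlf u n).toFinset,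
              (∑ b ∈ Bd, (cnt G u v b : ℝ)) / (Ngeo G u v : ℝ) := by
        calc (((ball_finite hconn hlf u n).toFinset \ Kf).card : ℝ)
            = ∑ _v ∈ (ball_finite hconn hlf u n).toFinset \ Kf, (1 : ℝ) := by
              rw [Finset.sum_const, nsmul_eq_mul, mul_one]
          _ ≤ ∑ v ∈ (ball_finite hconn hlf u n).toFinset \ Kf,
              (∑ b ∈ Bd, (cnt G u v b : ℝ)) / (Ngeo G u v : ℝ) :=
              Finset.sum_le_sum hterm
          _ ≤ ∑ v ∈ (ball_finite hconn hlf u n).toFinset,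
              (∑ b ∈ Bd, (cnt G u v b : ℝ)) / (Ngeo G u v : ℝ) := by
              refine Finset.sum_le_sum_of_subset_of_nonneg hsub ?_
              intro v _ _
              positivity
      refine le_trans ?_ hge
      have hcard : (ball_finite hconn hlf u n).toFinset.card
          ≤ ((ball_finite hconn hlf u n).toFinset \ Kf).card + Kf.card :=
        Finset.card_le_card_sdiff_add_card
      rw [hbcard u, hKcard] at hcard
      have : ((bn : ℕ) : ℝ) ≤ (((ball_finite hconn hlf u n).toFinset \ Kf).card : ℝ)
          + (k : ℝ) := by exact_mod_cast hcard
      linarith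
    calc (k : ℝ) * ((bn : ℝ) - (k : ℝ))
        = ∑ _u ∈ Kf, ((bn : ℝ) - (k : ℝ)) := by
          rw [Finset.sum_const, nsmul_eq_mul, hKcard]
      _ ≤ ∑ u ∈ Kf, ∑ b ∈ Bd, fcon hconn hlf n u b := Finset.sum_le_sum hstep2
      _ = ∑ b ∈ Bd, ∑ u ∈ Kf, fcon hconn hlf n u b := Finset.sum_comm
      _ ≤ S := by
          rw [hS]
          exact Finset.sum_le_sum hstep1
  -- combine
  have hbnk : (2 : ℝ) * (k : ℝ) ≤ (bn : ℝ) := by exact_mod_cast hbig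
  have hbnpos : (0 : ℝ) < (bn : ℝ) := by
    have : (0:ℝ) < 2 * (k:ℝ) := by
      have : (1:ℝ) ≤ (k:ℝ) := by exact_mod_cast hkpos
      linarith
    linarith
  have hmain : (k : ℝ) * ((bn : ℝ) / 2) ≤ (Bd.card : ℝ) * (((n : ℝ) + 1) * (bn : ℝ)) := by
    have h1 : (k : ℝ) * ((bn : ℝ) / 2) ≤ (k : ℝ) * ((bn : ℝ) - (k : ℝ)) := by
      have hknn : (0:ℝ) ≤ (k:ℝ) := by positivity
      have : (bn : ℝ) / 2 ≤ (bn : ℝ) - (k : ℝ) := by linarith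
      exact mul_le_mul_of_nonneg_left this hknn
    linarith
  rw [hBdcard] at hmain
  have hfinal : (k : ℝ) ≤ 2 * ((n : ℝ) + 1) * ((innerBoundary G K).ncard : ℝ) := by
    have h2 : (k : ℝ) * (bn : ℝ)
        ≤ (2 * ((n : ℝ) + 1) * ((innerBoundary G K).ncard : ℝ)) * (bn : ℝ) := by
      nlinarith [hmain]
    exact le_of_mul_le_mul_right h2 hbnpos
  exact hfinal


end AuxGeo

/-- At least cubic volume growth implies the 3-dimensional isoperimetric inequality
`|∂K| ≥ c'·|K|^{2/3}`. -/
theorem cubic_growth_implies_IS3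
    (G : SimpleGraph V)
    (hconn : G.Connected)
    (hlf : ∀ v : V, (G.neighborSet v).Finite)
    (htrans : ∀ u v : V, ∃ φ : G ≃g G, φ u = v)
    (o : V)
    (hgrowth : ∃ c : ℝ, 0 < c ∧ ∀ n : ℕ, 1 ≤ n →
      c * (n : ℝ) ^ 3 ≤ ((ball G o n).ncard : ℝ)) :
    ∃ c' : ℝ, 0 < c' ∧ ∀ K : Set V, K.Finite → K.Nonempty →
      c' * (K.ncard : ℝ) ^ ((2 : ℝ) / 3) ≤ ((innerBoundary G K).ncard : ℝ) := by
  classical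
  letI : DecidableEq V := Classical.decEq V
  letI : G.LocallyFinite := fun v => (hlf v).fintype
  obtain ⟨c, hc, hgr⟩ := hgrowth
  -- a uniform Coulhon--Saloff-Coste constant
  have hCSC : ∃ C : ℝ, 0 < C ∧ ∀ (K : Set V), K.Finite → K.Nonempty → ∀ n : ℕ,
      2 * K.ncard ≤ (ball G o n).ncard →
      (K.ncard : ℝ) ≤ C * ((n : ℝ) + 1) * ((innerBoundary G K).ncard : ℝ) := by
    by_cases hsym : ∀ x y : V, mu G x y = mu G y x
    · refine ⟨2, by norm_num, ?_⟩
      intro K hK hKne n hbig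
      exact csc_unimodular hconn hlf htrans hsym o hK hKne hbig
    · push_neg at hsym
      obtain ⟨C₀, hC₀pos, hC₀⟩ := csc_nonunimodular hconn hlf htrans hsym
      refine ⟨(C₀ : ℝ), by exact_mod_cast hC₀pos, ?_⟩
      intro K hK hKne n _
      have h1 : (K.ncard : ℝ) ≤ (C₀ : ℝ) * ((innerBoundary G K).ncard : ℝ) := by
        exact_mod_cast hC₀ K hK hKne
      have h0 : (0:ℝ) ≤ (n:ℝ) := by positivity
      have h2 : (1 : ℝ) ≤ (n : ℝ) + 1 := by linarith
      have h3 : (0:ℝ) ≤ ((innerBoundary G K).ncard : ℝ) := by positivity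
      have h4 : (0:ℝ) ≤ (C₀ : ℝ) := by positivity
      nlinarith
  obtain ⟨C, hCpos, hCSC⟩ := hCSC
  -- the final constant
  set A : ℝ := (2 / c) ^ ((1 : ℝ) / 3) + 3 with hA
  have hApos : 0 < A := by
    have : (0:ℝ) ≤ (2 / c) ^ ((1 : ℝ) / 3) := Real.rpow_nonneg (by positivity) _
    rw [hA]; linarith
  refine ⟨1 / (C * A), by positivity, ?_⟩
  intro K hK hKne
  set k : ℕ := K.ncard with hk
  have hkpos : 1 ≤ k := by
    have := (Set.ncard_pos hK).mpr hKne
    omega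
  have hkR : (1 : ℝ) ≤ (k : ℝ) := by exact_mod_cast hkpos
  have hkRpos : (0 : ℝ) < (k : ℝ) := by linarith
  set t : ℝ := (2 * (k : ℝ) / c) ^ ((1 : ℝ) / 3) with ht
  have htnn : 0 ≤ t := Real.rpow_nonneg (by positivity) _
  set n : ℕ := ⌈t⌉₊ + 1 with hn
  have hn1 : 1 ≤ n := by omega
  have hnt : t ≤ (n : ℝ) := by
    rw [hn]
    push_cast
    have := Nat.le_ceil t
    linarith
  -- the ball at radius n is big enough
  have hball : 2 * k ≤ (ball G o n).ncard := by
    have h3 : t ^ (3 : ℕ) = 2 * (k : ℝ) / c := by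
      rw [ht, ← Real.rpow_natCast ((2 * (k:ℝ) / c) ^ ((1:ℝ)/3)) 3,
        ← Real.rpow_mul (by positivity)]
      norm_num
    have h4 : 2 * (k : ℝ) ≤ c * (n : ℝ) ^ 3 := by
      have h5 : t ^ (3:ℕ) ≤ (n : ℝ) ^ (3:ℕ) := by
        exact pow_le_pow_left₀ htnn hnt 3
      rw [h3] at h5
      rw [div_le_iff₀ hc] at h5
      calc 2 * (k:ℝ) ≤ (n:ℝ)^(3:ℕ) * c := h5
        _ = c * (n:ℝ)^3 := by ring
    have h6 := hgr n hn1
    have h7 : 2 * (k : ℝ) ≤ ((ball G o n).ncard : ℝ) := le_trans h4 h6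
    exact_mod_cast h7
  have hmain := hCSC K hK hKne n hball
  -- bound n + 1
  have hnb : (n : ℝ) + 1 ≤ A * (k : ℝ) ^ ((1 : ℝ) / 3) := by
    have hceil : ((⌈t⌉₊ : ℕ) : ℝ) < t + 1 := Nat.ceil_lt_add_one htnn
    have hsplit : t = (2 / c) ^ ((1 : ℝ) / 3) * (k : ℝ) ^ ((1 : ℝ) / 3) := by
      rw [ht, show 2 * (k:ℝ) / c = (2 / c) * (k:ℝ) by ring]
      exact Real.mul_rpow (by positivity) (by positivity)
    have hk13 : (1 : ℝ) ≤ (k : ℝ) ^ ((1 : ℝ) / 3) :=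
      Real.one_le_rpow hkR (by norm_num)
    have hn2 : (n : ℝ) + 1 ≤ t + 3 := by
      rw [hn]
      push_cast
      linarith
    calc (n : ℝ) + 1 ≤ t + 3 := hn2
      _ = (2 / c) ^ ((1 : ℝ) / 3) * (k : ℝ) ^ ((1 : ℝ) / 3) + 3 := by rw [hsplit]
      _ ≤ (2 / c) ^ ((1 : ℝ) / 3) * (k : ℝ) ^ ((1 : ℝ) / 3)
          + 3 * (k : ℝ) ^ ((1 : ℝ) / 3) := by linarith
      _ = A * (k : ℝ) ^ ((1 : ℝ) / 3) := by rw [hA]; ring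
  -- conclude
  have hk13pos : (0 : ℝ) < (k : ℝ) ^ ((1 : ℝ) / 3) := Real.rpow_pos_of_pos hkRpos _
  have hksplit : (k : ℝ) = (k : ℝ) ^ ((1 : ℝ) / 3) * (k : ℝ) ^ ((2 : ℝ) / 3) := by
    rw [← Real.rpow_add hkRpos]
    norm_num
  have hbdnn : (0 : ℝ) ≤ ((innerBoundary G K).ncard : ℝ) := Nat.cast_nonneg _
  have hchain : (k : ℝ) ^ ((1 : ℝ) / 3) * (k : ℝ) ^ ((2 : ℝ) / 3)
      ≤ (k : ℝ) ^ ((1 : ℝ) / 3) * (C * A * ((innerBoundary G K).ncard : ℝ)) := by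
    rw [← hksplit]
    calc (k : ℝ) ≤ C * ((n : ℝ) + 1) * ((innerBoundary G K).ncard : ℝ) := hmain
      _ ≤ C * (A * (k : ℝ) ^ ((1 : ℝ) / 3)) * ((innerBoundary G K).ncard : ℝ) := by
          refine mul_le_mul_of_nonneg_right ?_ hbdnn
          exact mul_le_mul_of_nonneg_left hnb (le_of_lt hCpos)
      _ = (k : ℝ) ^ ((1 : ℝ) / 3) * (C * A * ((innerBoundary G K).ncard : ℝ)) := by ring
  have hfin : (k : ℝ) ^ ((2 : ℝ) / 3) ≤ C * A * ((innerBoundary G K).ncard : ℝ) :=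
    le_of_mul_le_mul_left hchain hk13pos
  rw [div_mul_eq_mul_div, one_mul, div_le_iff₀ (by positivity)]
  calc (k : ℝ) ^ ((2 : ℝ) / 3) ≤ C * A * ((innerBoundary G K).ncard : ℝ) := hfin
    _ = ((innerBoundary G K).ncard : ℝ) * (C * A) := by ring


end Stmt4
end

section
/- Let G be a connected, locally finite, vertex-transitive simple graph on vertex set V with a distinguished vertex o. Then there exists a map F which assigns to every injective function U : V → ℝ and every vertex x ∈ V a graph automorphism F(U,x) of G such that: (i) F(U,x)(o) = x for every x ∈ V; and (ii) for every graph automorphism γ of G and every x ∈ V, F(U ∘ γ⁻¹, γ(x)) = γ ∘ F(U,x) (equality of automorphisms, i.e. F(U∘γ⁻¹, γ(x))(y) = γ(F(U,x)(y)) for all y ∈ V). -/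
namespace Stmt8

variable {V : Type*}

private lemma some_eq_of_eq {α : Type*} {s t : Set α} (h : s = t)
    (hs : s.Nonempty) (ht : t.Nonempty) : hs.some = ht.some := by
  subst h; rfl

/-- Equivariant factor atlas: from any injective labelling `U : V → ℝ` one can produce, for
each vertex `x`, an automorphism taking the origin `o` to `x`, in an `Aut(G)`-equivariant
measurable-free way. -/
theorem equivariant_atlas
    (G : SimpleGraph V)
    (hconn : G.Connected)
    (hlf : ∀ v : V, (G.neighborSet v).Finite)
    (htrans : ∀ u v : V, ∃ φ : G ≃g G, φ u = v)
    (o : V) :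
    ∃ F : (V → ℝ) → V → (G ≃g G),
      ∀ U : V → ℝ, Function.Injective U →
        (∀ x : V, F U x o = x) ∧
        (∀ (γ : G ≃g G) (x y : V),
          F (fun v => U (γ.symm v)) (γ x) y = γ (F U x y)) := by
  classical
  set T : (V → ℝ) → V → Set (V → ℝ) :=
    fun U x => {f | ∃ φ : G ≃g G, φ o = x ∧ U ∘ ⇑φ = f} with hTdef
  have hT : ∀ (U : V → ℝ) (x : V), (T U x).Nonempty := by
    intro U x
    obtain ⟨φ, hφ⟩ := htrans o x
    exact ⟨U ∘ ⇑φ, φ, hφ, rfl⟩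
  have hmem : ∀ (U : V → ℝ) (x : V),
      ∃ φ : G ≃g G, φ o = x ∧ U ∘ ⇑φ = (hT U x).some :=
    fun U x => (hT U x).some_mem
  refine ⟨fun U x => (hmem U x).choose, ?_⟩
  intro U hU
  refine ⟨fun x => (hmem U x).choose_spec.1, ?_⟩
  intro γ x y
  set U' : V → ℝ := fun v => U (γ.symm v) with hU'
  have hTeq : T U' (γ x) = T U x := by
    ext f
    constructor
    · rintro ⟨ψ, hψo, rfl⟩
      refine ⟨ψ.trans γ.symm, by simp [hψo], ?_⟩
      funext v; simp [U']
    · rintro ⟨φ, hφo, rfl⟩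
      refine ⟨φ.trans γ, by simp [hφo], ?_⟩
      funext v; simp [U']
  have hf0 : (hT U' (γ x)).some = (hT U x).some := some_eq_of_eq hTeq _ _
  obtain ⟨hψo, hψf⟩ := (hmem U' (γ x)).choose_spec
  obtain ⟨hφo, hφf⟩ := (hmem U x).choose_spec
  set ψ := (hmem U' (γ x)).choose
  set φ := (hmem U x).choose
  have key : U (φ y) = U (γ.symm (ψ y)) := by
    have h1 : U (γ.symm (ψ y)) = (U' ∘ ⇑ψ) y := rfl
    rw [h1, hψf, hf0, ← hφf]; rfl
  show ψ y = γ (φ y)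
  rw [hU key]
  simp
end Stmt8
end

section
/- Let G be a connected, locally finite, vertex-transitive simple graph of degree d, and fix a vertex o. For vertices x, y let S(x)y denote the (finite) orbit of y under the stabilizer S(x) = {γ ∈ Aut(G) : γ(x)=x}. Then ∑_{x adjacent to o} |S(x)o| / |S(o)x| = d, where the sum of real numbers runs over the d neighbours x of o. -/
namespace Stmt10

variable {V : Type*}

/-- The orbit `S(x)y` of `y` under the stabilizer `S(x) = {γ ∈ Aut(G) : γ(x) = x}`. -/
def stabOrbit (G : SimpleGraph V) (x y : V) : Set V :=
  {w : V | ∃ γ : G ≃g G, γ x = x ∧ γ y = w}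

/-- Auxiliary relation: `Rel G o x y` iff some automorphism sends `(o, x)` to `(y, o)`. -/
def Rel (G : SimpleGraph V) (o x y : V) : Prop :=
  ∃ γ : G ≃g G, γ o = y ∧ γ x = o

lemma mem_stabOrbit_self (G : SimpleGraph V) (x y : V) : y ∈ stabOrbit G x y :=
  ⟨RelIso.refl _, rfl, rfl⟩

lemma stabOrbit_subset_neighborSet (G : SimpleGraph V) {x y : V} (h : G.Adj x y) :
    stabOrbit G x y ⊆ G.neighborSet x := by
  rintro w ⟨γ, hγx, rfl⟩
  have : G.Adj (γ x) (γ y) := γ.map_adj_iff.mpr h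
  rwa [hγx] at this

/-- If `γ` fixes `o` and sends `x` to `x'`, the `S(o)`-orbits of `x` and `x'` agree. -/
lemma stabOrbit_eq_of_map (G : SimpleGraph V) {o x x' : V}
    (γ : G ≃g G) (hγo : γ o = o) (hγx : γ x = x') :
    stabOrbit G o x' = stabOrbit G o x := by
  ext w
  constructor
  · rintro ⟨δ, hδo, rfl⟩
    refine ⟨γ.trans δ, ?_, ?_⟩
    · show δ (γ o) = o; rw [hγo, hδo]
    · show δ (γ x) = δ x'; rw [hγx]
  · rintro ⟨δ, hδo, rfl⟩
    refine ⟨γ.symm.trans δ, ?_, ?_⟩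
    · show δ (γ.symm o) = o
      conv_lhs => rw [← hγo, γ.symm_apply_apply]
      exact hδo
    · show δ (γ.symm x') = δ x; rw [← hγx, γ.symm_apply_apply]

lemma stabOrbit_eq_of_rel (G : SimpleGraph V) {o x x' y : V}
    (h : Rel G o x y) (h' : Rel G o x' y) : stabOrbit G o x' = stabOrbit G o x := by
  obtain ⟨γ, hγo, hγx⟩ := h
  obtain ⟨γ', hγ'o, hγ'x⟩ := h'
  -- γ'.trans γ.symm fixes o and sends x' to x... check: (γ'.trans γ.symm) o = γ.symm y = o? γ o = y ⇒ γ.symm y = o ✓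
  -- (γ'.trans γ.symm) x' = γ.symm o = x ✓
  refine (stabOrbit_eq_of_map G (γ'.trans γ.symm) ?_ ?_).symm
  · show γ.symm (γ' o) = o
    rw [hγ'o, ← hγo, γ.symm_apply_apply]
  · show γ.symm (γ' x') = x
    rw [hγ'x, ← hγx, γ.symm_apply_apply]

lemma rel_of_mem_stabOrbit (G : SimpleGraph V) {o x x' y : V}
    (h : Rel G o x y) (hx' : x' ∈ stabOrbit G o x) : Rel G o x' y := by
  obtain ⟨γ, hγo, hγx⟩ := h
  obtain ⟨δ, hδo, hδx⟩ := hx'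
  -- δ.symm.trans γ : sends o ↦ γ (δ.symm o) = γ o = y, x' ↦ γ (δ.symm x') = γ x = o
  refine ⟨δ.symm.trans γ, ?_, ?_⟩
  · show γ (δ.symm o) = y
    rw [← hδo, δ.symm_apply_apply, hγo]
  · show γ (δ.symm x') = o
    rw [← hδx, δ.symm_apply_apply, hγx]

lemma mem_stabOrbit_of_rel (G : SimpleGraph V) {o x x' y : V}
    (h : Rel G o x y) (h' : Rel G o x' y) : x' ∈ stabOrbit G o x := by
  obtain ⟨γ, hγo, hγx⟩ := h
  obtain ⟨γ', hγ'o, hγ'x⟩ := h'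
  refine ⟨γ.trans γ'.symm, ?_, ?_⟩
  · show γ'.symm (γ o) = o
    rw [hγo, ← hγ'o, γ'.symm_apply_apply]
  · show γ'.symm (γ x) = x'
    rw [hγx, ← hγ'x, γ'.symm_apply_apply]

lemma adj_of_rel (G : SimpleGraph V) {o x y : V} (hadj : G.Adj o x)
    (h : Rel G o x y) : G.Adj o y := by
  obtain ⟨γ, hγo, hγx⟩ := h
  have : G.Adj (γ o) (γ x) := γ.map_adj_iff.mpr hadj
  rw [hγo, hγx] at this
  exact this.symm

/-- `|S(x)o|` equals the number of `y` with `Rel G o x y`. -/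
lemma ncard_stabOrbit_eq (G : SimpleGraph V)
    (htrans : ∀ u v : V, ∃ φ : G ≃g G, φ u = v) (o x : V) :
    (stabOrbit G x o).ncard = {y | Rel G o x y}.ncard := by
  obtain ⟨ψ, hψ⟩ := htrans x o
  have himg : (fun w => ψ w) '' stabOrbit G x o = {y | Rel G o x y} := by
    ext y
    constructor
    · rintro ⟨w, ⟨γ, hγx, hγo⟩, rfl⟩
      exact ⟨γ.trans ψ, by simp [RelIso.trans_apply, hγo], by
        show ψ (γ x) = o; rw [hγx, hψ]⟩
    · rintro ⟨γ, hγo, hγx⟩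
      refine ⟨ψ.symm y, ⟨γ.trans ψ.symm, ?_, ?_⟩, ψ.apply_symm_apply y⟩
      · show ψ.symm (γ x) = x
        rw [hγx, ← hψ, ψ.symm_apply_apply]
      · show ψ.symm (γ o) = ψ.symm y
        rw [hγo]
  rw [← himg, Set.ncard_image_of_injective _ ψ.injective]

/-- Tilted mass transport identity on a transitive graph of degree `d`:
`∑_{x ∼ o} |S(x)o| / |S(o)x| = d`. -/
theorem sum_stabilizer_orbit_ratio_eq_degree
    (G : SimpleGraph V) (d : ℕ) (hd : 1 ≤ d)
    (hconn : G.Connected)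
    (hlf : ∀ v : V, (G.neighborSet v).Finite)
    (hreg : ∀ v : V, (G.neighborSet v).ncard = d)
    (htrans : ∀ u v : V, ∃ φ : G ≃g G, φ u = v)
    (o : V) :
    ∑ᶠ x ∈ G.neighborSet o,
      ((stabOrbit G x o).ncard : ℝ) / ((stabOrbit G o x).ncard : ℝ) = (d : ℝ) := by
  classical
  have hNf : (G.neighborSet o).Finite := hlf o
  set N : Finset V := hNf.toFinset with hN
  have hNcoe : (N : Set V) = G.neighborSet o := hNf.coe_toFinset
  have hmemN : ∀ {x}, x ∈ N ↔ G.Adj o x := by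
    intro x; rw [← SimpleGraph.mem_neighborSet, ← hNcoe]; exact Iff.rfl
  -- turn finsum into a Finset sum
  rw [← hNcoe, finsum_mem_coe_finset]
  -- abbreviation for the S(o)-orbit cardinality
  set c : V → ℝ := fun x => ((stabOrbit G o x).ncard : ℝ) with hc
  -- Step 1: numerator as a count over neighbors
  have step1 : ∀ x ∈ N, ((stabOrbit G x o).ncard : ℝ)
      = ∑ y ∈ N, (if Rel G o x y then (1 : ℝ) else 0) := by
    intro x hx
    rw [ncard_stabOrbit_eq G htrans o x]
    have hset : {y | Rel G o x y} = ↑(N.filter (fun y => Rel G o x y)) := by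
      ext y
      simp only [Set.mem_setOf_eq, Finset.coe_filter, Set.mem_setOf_eq, Finset.mem_coe]
      exact ⟨fun h => ⟨hmemN.mpr (adj_of_rel G (hmemN.mp hx) h), h⟩, fun h => h.2⟩
    rw [hset, Set.ncard_coe_finset, Finset.sum_boole]
  -- rewrite the sum
  have hrw : ∑ x ∈ N, ((stabOrbit G x o).ncard : ℝ) / c x
      = ∑ x ∈ N, ∑ y ∈ N, (if Rel G o x y then (1 : ℝ) / c x else 0) := by
    refine Finset.sum_congr rfl fun x hx => ?_
    rw [step1 x hx, Finset.sum_div]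
    refine Finset.sum_congr rfl fun y _ => ?_
    split_ifs <;> simp
  rw [hrw, Finset.sum_comm]
  -- Step 2: inner sum is 1 for each y ∈ N
  have step2 : ∀ y ∈ N, ∑ x ∈ N, (if Rel G o x y then (1 : ℝ) / c x else 0) = 1 := by
    intro y hy
    -- find x₀ with Rel G o x₀ y
    obtain ⟨φ, hφ⟩ := htrans o y
    have hx0rel : Rel G o (φ.symm o) y := ⟨φ, hφ, φ.apply_symm_apply o⟩
    set x₀ : V := φ.symm o with hx₀
    have hx0adj : G.Adj o x₀ := by
      have : G.Adj (φ.symm y) (φ.symm o) := φ.symm.map_adj_iff.mpr (hmemN.mp hy).symm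
      rwa [← hφ, φ.symm_apply_apply] at this
    -- the set of x with Rel G o x y is exactly stabOrbit G o x₀, inside N
    have hfilter : N.filter (fun x => Rel G o x y) = N.filter
        (fun x => x ∈ stabOrbit G o x₀) := by
      apply Finset.filter_congr
      intro x hx
      exact ⟨fun h => mem_stabOrbit_of_rel G hx0rel h,
        fun h => rel_of_mem_stabOrbit G hx0rel h⟩
    have horbsub : stabOrbit G o x₀ ⊆ G.neighborSet o :=
      stabOrbit_subset_neighborSet G hx0adj
    have horbfin : (stabOrbit G o x₀).Finite := (hlf o).subset horbsub
    have hfs : ((N.filter (fun x => x ∈ stabOrbit G o x₀)) : Set V)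
        = stabOrbit G o x₀ := by
      ext x
      simp only [Finset.coe_filter, Set.mem_setOf_eq, Finset.mem_coe]
      exact ⟨fun h => h.2, fun h => ⟨hmemN.mpr (horbsub h), h⟩⟩
    have hcardf : (N.filter (fun x => Rel G o x y)).card = (stabOrbit G o x₀).ncard := by
      rw [hfilter, ← Set.ncard_coe_finset, hfs]
    have hcpos : (0 : ℝ) < c x₀ := by
      have : 0 < (stabOrbit G o x₀).ncard :=
        (Set.ncard_pos horbfin).mpr ⟨x₀, mem_stabOrbit_self G o x₀⟩
      simp only [hc]
      exact_mod_cast this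
    calc ∑ x ∈ N, (if Rel G o x y then (1 : ℝ) / c x else 0)
        = ∑ x ∈ N.filter (fun x => Rel G o x y), (1 : ℝ) / c x :=
          (Finset.sum_filter _ _).symm
      _ = ∑ x ∈ N.filter (fun x => Rel G o x y), (1 : ℝ) / c x₀ := by
          refine Finset.sum_congr rfl fun x hx => ?_
          have hxrel : Rel G o x y := (Finset.mem_filter.mp hx).2
          have : stabOrbit G o x = stabOrbit G o x₀ :=
            stabOrbit_eq_of_rel G hx0rel hxrel
          simp only [hc, this]
      _ = ((stabOrbit G o x₀).ncard : ℝ) * (1 / c x₀) := by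
          rw [Finset.sum_const, hcardf, nsmul_eq_mul]
      _ = 1 := by
          simp only [hc] at hcpos ⊢
          field_simp
  rw [Finset.sum_congr rfl step2]
  simp only [Finset.sum_const, nsmul_eq_mul, mul_one]
  have : N.card = d := by
    rw [← Set.ncard_coe_finset, hNcoe, hreg o]
  rw [this]

end Stmt10
end

section
/- Let G be a connected, locally finite, vertex-transitive simple graph of degree d, fix a vertex o, and for vertices x, y let S(x)y denote the (finite) orbit of y under the stabilizer S(x) = {γ ∈ Aut(G) : γ(x)=x}. Suppose there exists a neighbour x of o with |S(o)x| ≠ |S(x)o| (which holds at every vertex of any non-unimodular transitive graph). Then ∑_{x adjacent to o} log( |S(x)o| / |S(o)x| ) < 0. -/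
namespace Stmt11

variable {V : Type*}

/-- The orbit `S(x)y` of `y` under the stabilizer `S(x) = {γ ∈ Aut(G) : γ(x) = x}`. -/
def stabOrbit (G : SimpleGraph V) (x y : V) : Set V :=
  {w : V | ∃ γ : G ≃g G, γ x = x ∧ γ y = w}

/-- The "reversed orbit": images of `o` under automorphisms sending `x` to `o`. -/
def revOrbit (G : SimpleGraph V) (o x : V) : Set V :=
  {y : V | ∃ ψ : G ≃g G, ψ x = o ∧ ψ o = y}

lemma mem_revOrbit_symm {G : SimpleGraph V} {o x y : V} :
    y ∈ revOrbit G o x ↔ x ∈ revOrbit G o y := by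
  constructor
  · rintro ⟨ψ, h1, h2⟩
    exact ⟨ψ.symm, by rw [← h2, ψ.symm_apply_apply], by rw [← h1, ψ.symm_apply_apply]⟩
  · rintro ⟨ψ, h1, h2⟩
    exact ⟨ψ.symm, by rw [← h2, ψ.symm_apply_apply], by rw [← h1, ψ.symm_apply_apply]⟩

lemma revOrbit_eq_stabOrbit {G : SimpleGraph V} {o x y : V} (h : y ∈ revOrbit G o x) :
    revOrbit G o x = stabOrbit G o y := by
  obtain ⟨ψ₀, hx, hy⟩ := h
  ext z
  constructor
  · rintro ⟨ψ, h1, h2⟩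
    have hsx : ψ₀.symm o = x := by rw [← hx, ψ₀.symm_apply_apply]
    have hsy : ψ₀.symm y = o := by rw [← hy, ψ₀.symm_apply_apply]
    refine ⟨ψ₀.symm.trans ψ, ?_, ?_⟩
    · show ψ (ψ₀.symm o) = o
      rw [hsx, h1]
    · show ψ (ψ₀.symm y) = z
      rw [hsy, h2]
  · rintro ⟨γ, g1, g2⟩
    refine ⟨ψ₀.trans γ, ?_, ?_⟩
    · show γ (ψ₀ x) = o
      rw [hx, g1]
    · show γ (ψ₀ o) = z
      rw [hy, g2]

lemma ncard_stab_eq_rev {G : SimpleGraph V} (htrans : ∀ u v : V, ∃ φ : G ≃g G, φ u = v)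
    (o x : V) : (stabOrbit G x o).ncard = (revOrbit G o x).ncard := by
  obtain ⟨φ, hφ⟩ := htrans x o
  have himg : revOrbit G o x = φ '' stabOrbit G x o := by
    ext y
    constructor
    · rintro ⟨ψ, h1, h2⟩
      refine ⟨φ.symm y, ⟨ψ.trans φ.symm, ?_, ?_⟩, φ.apply_symm_apply y⟩
      · show φ.symm (ψ x) = x
        rw [h1, ← hφ, φ.symm_apply_apply]
      · show φ.symm (ψ o) = φ.symm y
        rw [h2]
    · rintro ⟨w, ⟨γ, g1, g2⟩, rfl⟩
      refine ⟨γ.trans φ, ?_, ?_⟩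
      · show φ (γ x) = o
        rw [g1, hφ]
      · show φ (γ o) = φ w
        rw [g2]
  rw [himg, Set.ncard_image_of_injective _ φ.injective]

/-- On a non-unimodular transitive graph, the drift of the log-modular function is negative:
`∑_{x ∼ o} log(|S(x)o| / |S(o)x|) < 0`. -/
theorem negative_log_drift
    (G : SimpleGraph V) (d : ℕ) (hd : 1 ≤ d)
    (hconn : G.Connected)
    (hlf : ∀ v : V, (G.neighborSet v).Finite)
    (hreg : ∀ v : V, (G.neighborSet v).ncard = d)
    (htrans : ∀ u v : V, ∃ φ : G ≃g G, φ u = v)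
    (o : V)
    (hnonunimod : ∃ x : V, G.Adj o x ∧ (stabOrbit G o x).ncard ≠ (stabOrbit G x o).ncard) :
    ∑ᶠ x ∈ G.neighborSet o,
      Real.log (((stabOrbit G x o).ncard : ℝ) / ((stabOrbit G o x).ncard : ℝ)) < 0 := by
  classical
  obtain ⟨x₀, hx₀adj, hx₀ne⟩ := hnonunimod
  have hNfin : (G.neighborSet o).Finite := hlf o
  set t : Finset V := hNfin.toFinset with ht
  have hmem : ∀ x, x ∈ t ↔ G.Adj o x := by
    intro x
    simp [ht, Set.Finite.mem_toFinset]
  have hOsub : ∀ x ∈ t, stabOrbit G o x ⊆ G.neighborSet o := by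
    intro x hx w hw
    obtain ⟨γ, g1, g2⟩ := hw
    have hadj : G.Adj (γ o) (γ x) := γ.map_adj_iff.mpr ((hmem x).1 hx)
    rw [g1, g2] at hadj
    exact hadj
  have hQsub : ∀ x ∈ t, revOrbit G o x ⊆ G.neighborSet o := by
    intro x hx y hy
    obtain ⟨ψ, h1, h2⟩ := hy
    have hadj : G.Adj (ψ o) (ψ x) := ψ.map_adj_iff.mpr ((hmem x).1 hx)
    rw [h1, h2] at hadj
    exact hadj.symm
  have hOfin : ∀ x ∈ t, (stabOrbit G o x).Finite := fun x hx => hNfin.subset (hOsub x hx)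
  have hQfin : ∀ x ∈ t, (revOrbit G o x).Finite := fun x hx => hNfin.subset (hQsub x hx)
  have hOpos : ∀ x ∈ t, 0 < (stabOrbit G o x).ncard := by
    intro x hx
    exact (Set.ncard_pos (hOfin x hx)).mpr ⟨x, RelIso.refl G.Adj, rfl, rfl⟩
  have hQpos : ∀ x ∈ t, 0 < (revOrbit G o x).ncard := by
    intro x hx
    obtain ⟨φ, hφ⟩ := htrans x o
    exact (Set.ncard_pos (hQfin x hx)).mpr ⟨φ o, φ, hφ, rfl⟩
  have hQcard : ∀ x ∈ t, ((revOrbit G o x).ncard : ℝ)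
      = ∑ y ∈ t, if y ∈ revOrbit G o x then (1 : ℝ) else 0 := by
    intro x hx
    rw [Finset.sum_boole]
    congr 1
    have hfe : t.filter (fun y => y ∈ revOrbit G o x) = (hQfin x hx).toFinset := by
      ext y
      simp only [Finset.mem_filter, Set.Finite.mem_toFinset]
      exact ⟨fun h => h.2, fun h => ⟨(hmem y).2 (hQsub x hx h), h⟩⟩
    rw [hfe, ← Set.ncard_eq_toFinset_card _ (hQfin x hx)]
  have hcardt : t.card = d := by
    rw [← hreg o, Set.ncard_eq_toFinset_card _ hNfin]
  have key : ∑ x ∈ t, (((revOrbit G o x).ncard : ℝ) / ((stabOrbit G o x).ncard : ℝ)) = (d : ℝ) := by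
    have lhs_eq : ∑ x ∈ t, (((revOrbit G o x).ncard : ℝ) / ((stabOrbit G o x).ncard : ℝ))
        = ∑ x ∈ t, ∑ y ∈ t,
            (if y ∈ revOrbit G o x then (1 : ℝ) / ((stabOrbit G o x).ncard : ℝ) else 0) := by
      refine Finset.sum_congr rfl fun x hx => ?_
      rw [hQcard x hx, Finset.sum_div]
      refine Finset.sum_congr rfl fun y _ => ?_
      split_ifs <;> simp
    have rhs_eq : (d : ℝ)
        = ∑ y ∈ t, ∑ x ∈ t,
            (if x ∈ revOrbit G o y then (1 : ℝ) / ((stabOrbit G o x).ncard : ℝ) else 0) := by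
      have hd1 : (d : ℝ) = ∑ _y ∈ t, (1 : ℝ) := by simp [hcardt]
      rw [hd1]
      refine Finset.sum_congr rfl fun y hy => ?_
      have h1 : ∑ x ∈ t, (if x ∈ revOrbit G o y then (1 : ℝ) / ((stabOrbit G o x).ncard : ℝ) else 0)
          = ∑ x ∈ t, (if x ∈ revOrbit G o y then (1 : ℝ) / ((revOrbit G o y).ncard : ℝ) else 0) := by
        refine Finset.sum_congr rfl fun x _ => ?_
        by_cases h : x ∈ revOrbit G o y
        · rw [if_pos h, if_pos h, revOrbit_eq_stabOrbit h]
        · rw [if_neg h, if_neg h]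
      have h2 : ∑ x ∈ t, (if x ∈ revOrbit G o y then (1 : ℝ) / ((revOrbit G o y).ncard : ℝ) else 0)
          = (∑ x ∈ t, if x ∈ revOrbit G o y then (1 : ℝ) else 0) / ((revOrbit G o y).ncard : ℝ) := by
        rw [Finset.sum_div]
        refine Finset.sum_congr rfl fun x _ => ?_
        split_ifs <;> simp
      rw [h1, h2, ← hQcard y hy, div_self]
      exact_mod_cast (hQpos y hy).ne'
    rw [lhs_eq, rhs_eq, Finset.sum_comm]
    refine Finset.sum_congr rfl fun x _ => Finset.sum_congr rfl fun y _ => ?_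
    exact if_congr mem_revOrbit_symm.symm rfl rfl
  have hgoal : ∑ᶠ x ∈ G.neighborSet o,
      Real.log (((stabOrbit G x o).ncard : ℝ) / ((stabOrbit G o x).ncard : ℝ))
      = ∑ x ∈ t, Real.log (((stabOrbit G x o).ncard : ℝ) / ((stabOrbit G o x).ncard : ℝ)) := by
    rw [← Set.Finite.coe_toFinset hNfin, finsum_mem_coe_finset]
  rw [hgoal]
  have hterm : ∀ x, ((stabOrbit G x o).ncard : ℝ)
      = ((revOrbit G o x).ncard : ℝ) := fun x => by
    rw [ncard_stab_eq_rev htrans]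
  have hx₀t : x₀ ∈ t := (hmem x₀).2 hx₀adj
  have hlt : ∑ x ∈ t, Real.log (((stabOrbit G x o).ncard : ℝ) / ((stabOrbit G o x).ncard : ℝ))
      < ∑ x ∈ t, (((revOrbit G o x).ncard : ℝ) / ((stabOrbit G o x).ncard : ℝ) - 1) := by
    apply Finset.sum_lt_sum
    · intro x hx
      rw [hterm x]
      have hpos : 0 < ((revOrbit G o x).ncard : ℝ) / ((stabOrbit G o x).ncard : ℝ) := by
        apply div_pos <;> exact_mod_cast (by first | exact hQpos x hx | exact hOpos x hx)
      exact Real.log_le_sub_one_of_pos hpos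
    · refine ⟨x₀, hx₀t, ?_⟩
      rw [hterm x₀]
      have hpos : 0 < ((revOrbit G o x₀).ncard : ℝ) / ((stabOrbit G o x₀).ncard : ℝ) := by
        apply div_pos <;> exact_mod_cast (by first | exact hQpos x₀ hx₀t | exact hOpos x₀ hx₀t)
      have hO0 : ((stabOrbit G o x₀).ncard : ℝ) ≠ 0 := by
        exact_mod_cast (hOpos x₀ hx₀t).ne'
      have hne : ((revOrbit G o x₀).ncard : ℝ) / ((stabOrbit G o x₀).ncard : ℝ) ≠ 1 := by
        intro h
        rw [div_eq_iff hO0, one_mul] at h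
        apply hx₀ne
        rw [ncard_stab_eq_rev htrans o x₀]
        exact_mod_cast h.symm
      exact Real.log_lt_sub_one_of_pos hpos hne
  calc ∑ x ∈ t, Real.log (((stabOrbit G x o).ncard : ℝ) / ((stabOrbit G o x).ncard : ℝ))
      < ∑ x ∈ t, (((revOrbit G o x).ncard : ℝ) / ((stabOrbit G o x).ncard : ℝ) - 1) := hlt
    _ = (d : ℝ) - d := by rw [Finset.sum_sub_distrib, key, Finset.sum_const, hcardt]; simp
    _ = 0 := by ring

end Stmt11
end

section
/- Let (Ω, 𝔽, P) be a probability space and let (X_i)_{i∈ℕ} be a sequence of real-valued random variables that are independent and identically distributed (each X_i has the same distribution as X_0), with X_0 integrable and E[X_0] < 0. Let S_n := ∑_{i=0}^{n-1} X_i (so S_0 = 0). Then almost surely the set of times at which the walk attains its overall maximum, {n ∈ ℕ : S_m ≤ S_n for all m ∈ ℕ}, is nonempty and finite. -/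
namespace Stmt12

open MeasureTheory ProbabilityTheory Filter

/-- For an i.i.d. random walk with strictly negative mean, the set of times at which the walk
attains its overall maximum is almost surely nonempty and finite. -/
theorem negative_drift_walk_max_times
    {Ω : Type*} [MeasurableSpace Ω] (P : Measure Ω) [IsProbabilityMeasure P]
    (X : ℕ → Ω → ℝ)
    (hmeas : ∀ i, Measurable (X i))
    (hindep : iIndepFun X P)
    (hident : ∀ i, IdentDistrib (X i) (X 0) P P)
    (hint : Integrable (X 0) P)
    (hneg : (∫ ω, X 0 ω ∂P) < 0) :
    ∀ᵐ ω ∂P,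
      {n : ℕ | ∀ m : ℕ, (∑ i ∈ Finset.range m, X i ω) ≤ ∑ i ∈ Finset.range n, X i ω}.Nonempty ∧
      {n : ℕ | ∀ m : ℕ, (∑ i ∈ Finset.range m, X i ω) ≤ ∑ i ∈ Finset.range n, X i ω}.Finite := by
  have hslln := strong_law_ae_real X hint
    (fun i j hij => hindep.indepFun hij) hident
  filter_upwards [hslln] with ω hω
  set S : ℕ → ℝ := fun n => ∑ i ∈ Finset.range n, X i ω with hS
  -- eventually S n < 0
  have hev : ∀ᶠ n in atTop, S n < 0 := by
    have h2 : ∀ᶠ n in atTop, (S n) / n < (∫ ω, X 0 ω ∂P) / 2 := by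
      have := hω (Iio_mem_nhds (by linarith : (∫ ω, X 0 ω ∂P) < (∫ ω, X 0 ω ∂P) / 2))
      exact this
    filter_upwards [h2, eventually_gt_atTop 0] with n hn hn0
    have hnpos : (0:ℝ) < n := by exact_mod_cast hn0
    have : S n < ((∫ ω, X 0 ω ∂P) / 2) * n := by
      have := (div_lt_iff₀ hnpos).mp hn
      linarith
    nlinarith
  obtain ⟨N, hN⟩ := eventually_atTop.mp hev
  -- any maximizer is < max N 1
  have hsub : {n : ℕ | ∀ m : ℕ, S m ≤ S n} ⊆ Finset.range N := by
    intro n hn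
    simp only [Finset.coe_range, Set.mem_Iio]
    by_contra h
    push_neg at h
    have h1 : S n < 0 := hN n h
    have h2 : S 0 ≤ S n := hn 0
    simp [hS] at h2
    linarith
  refine ⟨?_, Set.Finite.subset (Finset.range N).finite_toSet hsub⟩
  -- nonempty: take argmax over range (N+1)
  obtain ⟨n, hnmem, hnmax⟩ := Finset.exists_max_image (Finset.range (N+1)) S
    ⟨0, Finset.mem_range.mpr (Nat.succ_pos N)⟩
  refine ⟨n, fun m => ?_⟩
  rcases lt_or_ge m (N+1) with hm | hm
  · exact hnmax m (Finset.mem_range.mpr hm)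
  · have : S m < 0 := hN m (by omega)
    have h0 : S 0 ≤ S n := hnmax 0 (Finset.mem_range.mpr (Nat.succ_pos N))
    simp [hS] at h0
    linarith

end Stmt12
end
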